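/- Let p_n ∈ (0,1) with p_n = ω(log n / n). For each n sample G_{n+1} ~ G(n+1, p_n) and let G_n be its induced subgraph on the vertex set {1,…,n}; let d̄ = (n−1)p_n. Then there exists a constant c > 0 such that with high probability max_{1 ≤ u < v ≤ n} |R^{(n+1)}_{uv} − R^{(n)}_{uv}| ≤ c/d̄², where R^{(n)} and R^{(n+1)} denote the renormalized effective resistances in G_n and G_{n+1} respectively. -/

import Mathlib

open scoped Classical BigOperators ENNReal
open Filter MeasureTheory Topology Asymptotics ProbabilityTheory

noncomputable section

namespace RP

variable {V : Type*} [Fintype V]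

/-- A unit flow from `u` to `v` on the graph `G`. -/
def IsUnitFlow (G : SimpleGraph V) (u v : V) (f : V → V → ℝ) : Prop :=
  (∀ a b, f a b = - f b a) ∧
  (∀ a b, ¬ G.Adj a b → f a b = 0) ∧
  (∀ w, ∑ x, f w x = (if w = u then (1:ℝ) else 0) - (if w = v then (1:ℝ) else 0))

/-- Energy of a flow (each undirected edge counted once). -/
def energy (f : V → V → ℝ) : ℝ := (1/2) * ∑ a, ∑ b, (f a b)^2

/-- Effective resistance as infimum of energies of unit flows, `∞` if disconnected. -/
def effRes (G : SimpleGraph V) (u v : V) : ℝ≥0∞ :=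
  sInf {x : ℝ≥0∞ | ∃ f, IsUnitFlow G u v f ∧ x = ENNReal.ofReal (energy f)}

/-- Renormalized effective resistance `R̂/(R̂+1)`, equal to 1 when disconnected. -/
def renRes (G : SimpleGraph V) (u v : V) : ℝ :=
  if effRes G u v = ⊤ then 1
  else (effRes G u v).toReal / ((effRes G u v).toReal + 1)

/-- Renormalized resistance distance, summed over pairs `u < v` in `S`. -/
def RDon [LinearOrder V] (S : Finset V) (G₁ G₂ : SimpleGraph V) : ℝ :=
  ∑ p ∈ (S ×ˢ S).filter (fun p => p.1 < p.2),
    |renRes G₁ p.1 p.2 - renRes G₂ p.1 p.2|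

/-- Renormalized resistance distance on a full common vertex set. -/
def RD [LinearOrder V] (G₁ G₂ : SimpleGraph V) : ℝ := RDon Finset.univ G₁ G₂

/-- Sample space for random graphs on `n` vertices: one Boolean per potential edge. -/
def EdgeSpace (n : ℕ) : Type := Sym2 (Fin n) → Bool

instance (n : ℕ) : MeasurableSpace (EdgeSpace n) := by unfold EdgeSpace; infer_instance

/-- Bernoulli measure on `Bool`. -/
def bernoulliMeasure (x : ℝ≥0∞) : Measure Bool :=
  (PMF.bernoulli (min x 1).toNNReal
    (by simpa using ENNReal.toNNReal_mono ENNReal.one_ne_top (min_le_right x 1))).toMeasure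

/-- The Erdős–Rényi measure `G(n,p)`. -/
def erMeasure (n : ℕ) (p : ℝ) : Measure (EdgeSpace n) :=
  Measure.pi fun _ => bernoulliMeasure (ENNReal.ofReal p)

/-- Edge probabilities for the balanced two-community stochastic blockmodel:
vertex `i` carries the label `i+1`; the communities are formed by odd/even labels. -/
def sbmPe (n : ℕ) (p q : ℝ) : Sym2 (Fin n) → ℝ≥0∞ :=
  Sym2.lift ⟨fun u v => if (u.val + v.val) % 2 = 0 then ENNReal.ofReal p else ENNReal.ofReal q,
    fun u v => by dsimp only; rw [Nat.add_comm ↑u ↑v]⟩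

/-- The stochastic blockmodel measure `G(n,p,q)`. -/
def sbmMeasure (n : ℕ) (p q : ℝ) : Measure (EdgeSpace n) :=
  Measure.pi fun e => bernoulliMeasure (sbmPe n p q e)

/-- The simple graph determined by a point of the sample space. -/
def graphOf {n : ℕ} (ω : EdgeSpace n) : SimpleGraph (Fin n) where
  Adj u v := u ≠ v ∧ ω s(u, v) = true
  symm := ⟨fun u v h => ⟨h.1.symm, by rw [Sym2.eq_swap]; exact h.2⟩⟩
  loopless := ⟨fun u h => h.1 rfl⟩

/-- `u` and `v` belong to the same community (labels of equal parity). -/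
def sameComm {n : ℕ} (u v : Fin n) : Prop := u.val % 2 = v.val % 2

/-- Number of cross-community edges. -/
def crossCount {n : ℕ} (G : SimpleGraph (Fin n)) : ℕ :=
  ((Finset.univ : Finset (Fin n × Fin n)).filter
    (fun p => p.1 < p.2 ∧ G.Adj p.1 p.2 ∧ ¬ sameComm p.1 p.2)).card

/-- Total number of edges. -/
def edgeCount {n : ℕ} (G : SimpleGraph (Fin n)) : ℕ :=
  ((Finset.univ : Finset (Fin n × Fin n)).filter
    (fun p => p.1 < p.2 ∧ G.Adj p.1 p.2)).card

/-- Degree of vertex `u`. -/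
def deg {n : ℕ} (G : SimpleGraph (Fin n)) (u : Fin n) : ℕ :=
  (Finset.univ.filter (fun v => G.Adj u v)).card

/-- The induced subgraph on `{1,…,n}`, with vertex `n+1` kept as an isolated vertex. -/
def dropLast {n : ℕ} (G : SimpleGraph (Fin (n+1))) : SimpleGraph (Fin (n+1)) where
  Adj u v := G.Adj u v ∧ u ≠ Fin.last n ∧ v ≠ Fin.last n
  symm := ⟨fun u v h => ⟨h.1.symm, h.2.2, h.2.1⟩⟩
  loopless := ⟨fun u h => G.irrefl h.1⟩

/-- `h(n,k) = ⌊n/2⌋ + ⌈n/2⌉·k/(1+k)`. -/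
def hfun (n k : ℕ) : ℝ := ((n / 2 : ℕ) : ℝ) + (((n + 1) / 2 : ℕ) : ℝ) * (k : ℝ) / (1 + (k : ℝ))

/-- Size of the first community (odd labels). -/
def nOne (n : ℕ) : ℕ := (n + 1) / 2

/-- Size of the second community (even labels). -/
def nTwo (n : ℕ) : ℕ := n / 2



/-! ### Auxiliary development for Statement 6 -/

set_option linter.unusedSectionVars false
set_option maxHeartbeats 1000000

section DetTheory
variable {V : Type*} [Fintype V]

/-! ### Deterministic electrical theory -/

/-- 0/1 edge weight. -/
def aW (G : SimpleGraph V) (a b : V) : ℝ := if G.Adj a b then 1 else 0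

lemma aW_nonneg (G : SimpleGraph V) (a b : V) : 0 ≤ aW G a b := by
  unfold aW; split <;> norm_num

lemma aW_symm (G : SimpleGraph V) (a b : V) : aW G a b = aW G b a := by
  unfold aW; simp [SimpleGraph.adj_comm]

lemma aW_sq (G : SimpleGraph V) (a b : V) : aW G a b ^ 2 = aW G a b := by
  unfold aW; split <;> norm_num

/-- Dirichlet energy of a potential. -/
def eW (G : SimpleGraph V) (ψ : V → ℝ) : ℝ :=
  (1/2) * ∑ a, ∑ b, aW G a b * (ψ a - ψ b)^2

lemma eW_nonneg (G : SimpleGraph V) (ψ : V → ℝ) : 0 ≤ eW G ψ := by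
  unfold eW
  have : ∀ a ∈ (Finset.univ : Finset V), 0 ≤ ∑ b, aW G a b * (ψ a - ψ b)^2 := by
    intro a _
    exact Finset.sum_nonneg fun b _ => mul_nonneg (aW_nonneg G a b) (sq_nonneg _)
  nlinarith [Finset.sum_nonneg this]

lemma energy_nonneg (f : V → V → ℝ) : 0 ≤ energy f := by
  unfold energy
  have : ∀ a ∈ (Finset.univ : Finset V), 0 ≤ ∑ b, (f a b)^2 :=
    fun a _ => Finset.sum_nonneg fun b _ => sq_nonneg _
  nlinarith [Finset.sum_nonneg this]

/-- Laplacian. -/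
def lap (G : SimpleGraph V) (ψ : V → ℝ) (a : V) : ℝ := ∑ b, aW G a b * (ψ a - ψ b)

def bvec (u v : V) : V → ℝ := fun a => (if a = u then (1:ℝ) else 0) - (if a = v then (1:ℝ) else 0)

lemma double_swap (F : V → V → ℝ) : ∑ a, ∑ b, F a b = ∑ a, ∑ b, F b a := Finset.sum_comm

lemma dot_lap_eq (G : SimpleGraph V) (φ ψ : V → ℝ) :
    ∑ a, φ a * lap G ψ a = (1/2) * ∑ a, ∑ b, aW G a b * (φ a - φ b) * (ψ a - ψ b) := by
  have h1 : ∑ a, φ a * lap G ψ a = ∑ a, ∑ b, aW G a b * φ a * (ψ a - ψ b) := by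
    apply Finset.sum_congr rfl; intro a _
    rw [lap, Finset.mul_sum]; apply Finset.sum_congr rfl; intro b _; ring
  have h2 : ∑ a, ∑ b, aW G a b * φ a * (ψ a - ψ b)
      = ∑ a, ∑ b, aW G a b * (- φ b) * (ψ a - ψ b) := by
    rw [double_swap (fun a b => aW G a b * (- φ b) * (ψ a - ψ b))]
    apply Finset.sum_congr rfl; intro a _; apply Finset.sum_congr rfl; intro b _
    rw [aW_symm G b a]; ring
  have h3 : ∀ a b : V, aW G a b * φ a * (ψ a - ψ b) + aW G a b * (- φ b) * (ψ a - ψ b)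
      = aW G a b * (φ a - φ b) * (ψ a - ψ b) := by intro a b; ring
  rw [h1]
  have : (2:ℝ) * ∑ a, ∑ b, aW G a b * φ a * (ψ a - ψ b)
      = ∑ a, ∑ b, aW G a b * (φ a - φ b) * (ψ a - ψ b) := by
    rw [two_mul]
    nth_rewrite 2 [h2]
    rw [← Finset.sum_add_distrib]
    apply Finset.sum_congr rfl; intro a _
    rw [← Finset.sum_add_distrib]
    exact Finset.sum_congr rfl fun b _ => h3 a b
  linarith

lemma dot_lap_self (G : SimpleGraph V) (ψ : V → ℝ) :
    ∑ a, ψ a * lap G ψ a = eW G ψ := by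
  rw [dot_lap_eq, eW]
  congr 1
  apply Finset.sum_congr rfl; intro a _; apply Finset.sum_congr rfl; intro b _; ring

lemma lap_symm (G : SimpleGraph V) (φ ψ : V → ℝ) :
    ∑ a, φ a * lap G ψ a = ∑ a, ψ a * lap G φ a := by
  rw [dot_lap_eq, dot_lap_eq]
  congr 1
  apply Finset.sum_congr rfl; intro a _; apply Finset.sum_congr rfl; intro b _; ring

lemma eW_eq_zero_adj {G : SimpleGraph V} {ψ : V → ℝ} (h : eW G ψ = 0) :
    ∀ a b, G.Adj a b → ψ a = ψ b := by
  intro a b hab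
  have hnn : ∀ a ∈ (Finset.univ : Finset V), 0 ≤ ∑ b, aW G a b * (ψ a - ψ b)^2 := by
    intro a _
    exact Finset.sum_nonneg fun b _ => mul_nonneg (aW_nonneg G a b) (sq_nonneg _)
  have h0 : ∑ a, ∑ b, aW G a b * (ψ a - ψ b)^2 = 0 := by
    unfold eW at h; linarith
  have h1 := (Finset.sum_eq_zero_iff_of_nonneg hnn).1 h0 a (Finset.mem_univ a)
  have hnn2 : ∀ c ∈ (Finset.univ : Finset V), 0 ≤ aW G a c * (ψ a - ψ c)^2 :=
    fun c _ => mul_nonneg (aW_nonneg G a c) (sq_nonneg _)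
  have h2 := (Finset.sum_eq_zero_iff_of_nonneg hnn2).1 h1 b (Finset.mem_univ b)
  have : aW G a b = 1 := by unfold aW; simp [hab]
  rw [this, one_mul] at h2
  have := sq_eq_zero_iff.1 h2
  linarith

/-- The pairing identity for unit flows. -/
lemma flow_pairing {G : SimpleGraph V} {u v : V} {f : V → V → ℝ}
    (hf : IsUnitFlow G u v f) (ψ : V → ℝ) :
    ∑ a, ∑ b, f a b * (ψ a - ψ b) = 2 * (ψ u - ψ v) := by
  obtain ⟨hanti, -, hdiv⟩ := hf
  have h1 : ∑ a, ∑ b, f a b * ψ a = ψ u - ψ v := by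
    have : ∀ a, ∑ b, f a b * ψ a = ψ a * bvec u v a := by
      intro a
      rw [← Finset.sum_mul, hdiv a]; rw [bvec]; ring
    rw [Finset.sum_congr rfl fun a _ => this a]
    simp [bvec, mul_sub, Finset.sum_sub_distrib]
  have h2 : ∑ a, ∑ b, f a b * ψ b = -(ψ u - ψ v) := by
    rw [double_swap (fun a b => f a b * ψ b)]
    have : ∀ a, ∑ b, f b a * ψ a = - (ψ a * bvec u v a) := by
      intro a
      have : ∑ b, f b a = - ∑ b, f a b := by
        rw [← Finset.sum_neg_distrib]
        exact Finset.sum_congr rfl fun b _ => by rw [hanti b a]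
      rw [← Finset.sum_mul, this, hdiv a, bvec]; ring
    rw [Finset.sum_congr rfl fun a _ => this a]
    simp [bvec, mul_sub, Finset.sum_sub_distrib]
  have : ∑ a, ∑ b, f a b * (ψ a - ψ b)
      = (∑ a, ∑ b, f a b * ψ a) - ∑ a, ∑ b, f a b * ψ b := by
    rw [← Finset.sum_sub_distrib]
    apply Finset.sum_congr rfl; intro a _
    rw [← Finset.sum_sub_distrib]
    exact Finset.sum_congr rfl fun b _ => by ring
  rw [this, h1, h2]; ring



/-- Cauchy–Schwarz: any unit flow and any potential. -/
lemma flow_energy_lb {G : SimpleGraph V} {u v : V} {f : V → V → ℝ}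
    (hf : IsUnitFlow G u v f) (ψ : V → ℝ) :
    (ψ u - ψ v)^2 ≤ energy f * eW G ψ := by
  have key : ∑ a, ∑ b, f a b * (ψ a - ψ b) = ∑ p : V × V, f p.1 p.2 * (aW G p.1 p.2 * (ψ p.1 - ψ p.2)) := by
    rw [Fintype.sum_prod_type]
    apply Finset.sum_congr rfl
    intro a _
    apply Finset.sum_congr rfl
    intro b _
    by_cases h : G.Adj a b
    · simp [aW, h]
    · simp [aW, h, hf.2.1 a b h]
  have cs := Finset.sum_mul_sq_le_sq_mul_sq Finset.univ (fun p : V × V => f p.1 p.2)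
      (fun p : V × V => aW G p.1 p.2 * (ψ p.1 - ψ p.2))
  have e1 : ∑ p : V × V, (f p.1 p.2)^2 = 2 * energy f := by
    rw [Fintype.sum_prod_type, energy]; ring
  have e2 : ∑ p : V × V, (aW G p.1 p.2 * (ψ p.1 - ψ p.2))^2 = 2 * eW G ψ := by
    rw [Fintype.sum_prod_type, eW]
    have h2 : ∀ a b : V, (aW G a b * (ψ a - ψ b))^2 = aW G a b * (ψ a - ψ b)^2 :=
      fun a b => by rw [mul_pow, aW_sq]
    simp_rw [h2]; ring
  have e3 : (∑ p : V × V, f p.1 p.2 * (aW G p.1 p.2 * (ψ p.1 - ψ p.2))) = 2 * (ψ u - ψ v) := by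
    rw [← key, flow_pairing hf]
  rw [e3] at cs
  rw [e1, e2] at cs
  nlinarith [cs]

lemma effRes_le_of_flow {G : SimpleGraph V} {u v : V} {f : V → V → ℝ}
    (hf : IsUnitFlow G u v f) : effRes G u v ≤ ENNReal.ofReal (energy f) :=
  sInf_le ⟨f, hf, rfl⟩

lemma effRes_ge_of_potential {G : SimpleGraph V} {u v : V} (ψ : V → ℝ)
    (h : 0 < eW G ψ) :
    ENNReal.ofReal ((ψ u - ψ v)^2 / eW G ψ) ≤ effRes G u v := by
  apply le_sInf
  rintro x ⟨f, hf, rfl⟩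
  rw [ENNReal.ofReal_le_ofReal_iff (energy_nonneg f)]
  rw [div_le_iff₀ h]
  exact flow_energy_lb hf ψ

lemma effRes_mono {G₁ G₂ : SimpleGraph V} (h : ∀ a b, G₁.Adj a b → G₂.Adj a b)
    (u v : V) : effRes G₂ u v ≤ effRes G₁ u v := by
  apply sInf_le_sInf
  rintro x ⟨f, hf, rfl⟩
  refine ⟨f, ⟨hf.1, fun a b hab => hf.2.1 a b (fun h' => hab (h a b h')), hf.2.2⟩, rfl⟩

/-- Laplacian as a linear map. -/
def lapL (G : SimpleGraph V) : (V → ℝ) →ₗ[ℝ] (V → ℝ) where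
  toFun ψ := lap G ψ
  map_add' ψ φ := by
    funext a
    simp only [lap, Pi.add_apply]
    rw [← Finset.sum_add_distrib]
    apply Finset.sum_congr rfl; intro b _; ring
  map_smul' c ψ := by
    funext a
    simp only [lap, Pi.smul_apply, RingHom.id_apply, smul_eq_mul]
    rw [Finset.mul_sum]
    apply Finset.sum_congr rfl; intro b _; ring


lemma sum_mul_bvec (k : V → ℝ) (u v : V) : ∑ a, k a * bvec u v a = k u - k v := by
  unfold bvec
  have : ∀ a : V, k a * ((if a = u then (1:ℝ) else 0) - (if a = v then (1:ℝ) else 0))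
      = (if a = u then k a else 0) - (if a = v then k a else 0) := by
    intro a; split <;> split <;> ring
  rw [Finset.sum_congr rfl fun a _ => this a, Finset.sum_sub_distrib]
  simp [Finset.sum_ite_eq']

lemma lapL_apply (G : SimpleGraph V) (ψ : V → ℝ) : lapL G ψ = lap G ψ := rfl

lemma harmonic_exists (G : SimpleGraph V) (u v : V)
    (hker : ∀ k : V → ℝ, lapL G k = 0 → k u = k v) :
    ∃ φ : V → ℝ, lapL G φ = bvec u v := by
  classical
  set R := LinearMap.range (lapL G) with hR
  set K := LinearMap.ker (lapL G) with hK
  have hsym : ∀ x y : V → ℝ, ∑ a, x a * lapL G y a = ∑ a, y a * lapL G x a :=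
    fun x y => lap_symm G x y
  have sqzero : ∀ x : V → ℝ, ∑ a, x a * x a = 0 → x = 0 := by
    intro x hx
    funext a
    have hnn : ∀ a ∈ (Finset.univ : Finset V), 0 ≤ x a * x a := fun a _ => mul_self_nonneg _
    have := (Finset.sum_eq_zero_iff_of_nonneg hnn).1 hx a (Finset.mem_univ a)
    have := mul_self_eq_zero.1 this
    simpa using this
  have hdisj : R ⊓ K = ⊥ := by
    rw [Submodule.eq_bot_iff]
    rintro x ⟨⟨y, rfl⟩, hk⟩
    have hk' : lapL G (lapL G y) = 0 := LinearMap.mem_ker.1 hk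
    apply sqzero
    rw [hsym (lapL G y) y, hk']
    simp
  have hdim : R ⊔ K = ⊤ := by
    apply Submodule.eq_top_of_finrank_eq
    have h1 := Submodule.finrank_sup_add_finrank_inf_eq R K
    rw [hdisj] at h1
    simp only [finrank_bot, add_zero] at h1
    rw [h1]
    exact LinearMap.finrank_range_add_finrank_ker (lapL G)
  have hb : bvec u v ∈ R ⊔ K := hdim ▸ Submodule.mem_top
  obtain ⟨r, hr, k, hk, hrk⟩ := Submodule.mem_sup.1 hb
  obtain ⟨y, rfl⟩ := hr
  have hk0 : k = 0 := by
    apply sqzero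
    have e1 : ∀ a, k a = bvec u v a - lapL G y a := by
      intro a; have := congrFun hrk a; simp at this ⊢; linarith
    have e2 : ∑ a, k a * k a = ∑ a, k a * bvec u v a - ∑ a, k a * lapL G y a := by
      rw [← Finset.sum_sub_distrib]
      apply Finset.sum_congr rfl; intro a _
      rw [← mul_sub, ← e1 a]
    rw [e2, sum_mul_bvec, hker k (LinearMap.mem_ker.1 hk),
      hsym k y, LinearMap.mem_ker.1 hk]
    simp
  refine ⟨y, ?_⟩
  rw [hk0, add_zero] at hrk
  exact hrk

/-- Full computation of effective resistance from a harmonic potential. -/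
lemma effRes_eq_of_harmonic {G : SimpleGraph V} {u v : V} (huv : u ≠ v)
    {φ : V → ℝ} (hφ : lapL G φ = bvec u v) :
    0 < φ u - φ v ∧ eW G φ = φ u - φ v ∧ effRes G u v = ENNReal.ofReal (φ u - φ v) := by
  classical
  have heW : eW G φ = φ u - φ v := by
    rw [← dot_lap_self]
    have : ∀ a, φ a * lap G φ a = φ a * bvec u v a := by
      intro a; rw [show lap G φ a = lapL G φ a from rfl, hφ]
    rw [Finset.sum_congr rfl fun a _ => this a, sum_mul_bvec]
  have hpos : 0 < φ u - φ v := by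
    rcases lt_or_eq_of_le (eW_nonneg G φ) with h | h
    · linarith [heW]
    · exfalso
      have hlz : ∀ a b, G.Adj a b → φ a = φ b := eW_eq_zero_adj h.symm
      have : lap G φ u = 0 := by
        rw [lap]
        apply Finset.sum_eq_zero
        intro b _
        by_cases hb : G.Adj u b
        · rw [hlz u b hb]; ring
        · simp [aW, hb]
      have h2 : lapL G φ u = bvec u v u := by rw [hφ]
      rw [show lapL G φ u = lap G φ u from rfl, this] at h2
      unfold bvec at h2
      simp [huv] at h2
  -- the harmonic flow
  set f : V → V → ℝ := fun a b => aW G a b * (φ a - φ b) with hf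
  have hflow : IsUnitFlow G u v f := by
    refine ⟨?_, ?_, ?_⟩
    · intro a b; rw [hf]; simp only; rw [aW_symm G a b]; ring
    · intro a b hab; rw [hf]; simp only [aW, if_neg hab]; ring
    · intro w
      have := congrFun hφ w
      rw [show lapL G φ w = lap G φ w from rfl] at this
      rw [show (∑ x, f w x) = lap G φ w from rfl, this]
      rfl
  have hen : energy f = eW G φ := by
    rw [energy, eW]
    congr 1
    apply Finset.sum_congr rfl; intro a _
    apply Finset.sum_congr rfl; intro b _
    rw [hf]; simp only
    rw [mul_pow, aW_sq]
  have hle : effRes G u v ≤ ENNReal.ofReal (φ u - φ v) := by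
    have := effRes_le_of_flow hflow
    rwa [hen, heW] at this
  have hge : ENNReal.ofReal (φ u - φ v) ≤ effRes G u v := by
    have h1 := effRes_ge_of_potential (G := G) (u := u) (v := v) φ (by rw [heW]; exact hpos)
    have : (φ u - φ v)^2 / eW G φ = φ u - φ v := by
      rw [heW]; field_simp [ne_of_gt hpos]
    rwa [this] at h1
  exact ⟨hpos, heW, le_antisymm hle hge⟩

lemma renRes_eq {G : SimpleGraph V} {u v : V} {R : ℝ} (hR : 0 ≤ R)
    (h : effRes G u v = ENNReal.ofReal R) : renRes G u v = R / (R + 1) := by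
  rw [renRes, if_neg (by rw [h]; exact ENNReal.ofReal_ne_top), h, ENNReal.toReal_ofReal hR]

variable [DecidableEq V]

/-- Cut weight between two finsets. -/
def cutW (G : SimpleGraph V) (S S' : Finset V) : ℝ := ∑ a ∈ S, ∑ b ∈ S', aW G a b

def indF (S : Finset V) (v : V) : ℝ := if v ∈ S then 1 else 0

lemma aW_eq_zero_of_not_adj {G : SimpleGraph V} {a b : V} (h : ¬ G.Adj a b) : aW G a b = 0 := by
  simp [aW, h]

/-- Crossing-edge expansion of the indicator double sum. -/
lemma ind_cut (G : SimpleGraph V) (T : Finset V)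
    (hT : ∀ a b, G.Adj a b → a ∈ T ∧ b ∈ T) (S : Finset V) (hS : S ⊆ T) :
    ∑ a, ∑ b, aW G a b * |indF S a - indF S b| = 2 * cutW G S (T \ S) := by
  classical
  have split : ∀ a b : V, aW G a b * |indF S a - indF S b|
      = (if a ∈ S ∧ b ∉ S then aW G a b else 0) + (if b ∈ S ∧ a ∉ S then aW G a b else 0) := by
    intro a b
    unfold indF
    by_cases ha : a ∈ S <;> by_cases hb : b ∈ S <;> simp [ha, hb]
  rw [Finset.sum_congr rfl fun a _ => Finset.sum_congr rfl fun b _ => split a b]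
  have sumsplit : ∑ a, ∑ b, ((if a ∈ S ∧ b ∉ S then aW G a b else 0)
        + (if b ∈ S ∧ a ∉ S then aW G a b else 0))
      = (∑ a, ∑ b, if a ∈ S ∧ b ∉ S then aW G a b else 0)
        + ∑ a, ∑ b, if b ∈ S ∧ a ∉ S then aW G a b else 0 := by
    rw [← Finset.sum_add_distrib]
    apply Finset.sum_congr rfl; intro a _
    rw [← Finset.sum_add_distrib]
  rw [sumsplit]
  have term1 : ∀ (W : V → V → ℝ), (∀ a b, ¬ G.Adj a b → W a b = 0) →
      (∑ a, ∑ b, if a ∈ S ∧ b ∉ S then W a b else 0) = ∑ a ∈ S, ∑ b ∈ T \ S, W a b := by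
    intro W hW0
    have h1 : ∀ a : V, (∑ b, if a ∈ S ∧ b ∉ S then W a b else 0)
        = if a ∈ S then ∑ b ∈ T \ S, W a b else 0 := by
      intro a
      by_cases ha : a ∈ S
      · rw [if_pos ha]
        have hpt : ∀ b : V, (if a ∈ S ∧ b ∉ S then W a b else 0) = if b ∉ S then W a b else 0 :=
          fun b => by simp [ha]
        rw [Finset.sum_congr rfl fun b _ => hpt b, ← Finset.sum_filter]
        symm
        apply Finset.sum_subset
        · intro b hb
          simp only [Finset.mem_filter, Finset.mem_univ, true_and]
          exact (Finset.mem_sdiff.1 hb).2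
        · intro b hb hnb
          simp only [Finset.mem_filter, Finset.mem_univ, true_and] at hb
          by_cases hadj : G.Adj a b
          · exact absurd (Finset.mem_sdiff.2 ⟨(hT a b hadj).2, hb⟩) hnb
          · exact hW0 a b hadj
      · simp [ha]
    rw [Finset.sum_congr rfl fun a _ => h1 a, ← Finset.sum_filter,
      Finset.filter_mem_eq_inter, Finset.univ_inter]
  have e1 := term1 (fun a b => aW G a b) (fun a b h => aW_eq_zero_of_not_adj h)
  have e2 : (∑ a, ∑ b, if b ∈ S ∧ a ∉ S then aW G a b else 0) = ∑ a ∈ S, ∑ b ∈ T \ S, aW G a b := by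
    rw [Finset.sum_comm]
    have := term1 (fun a b => aW G b a) (fun a b h => aW_eq_zero_of_not_adj fun h' => h h'.symm)
    simpa [aW_symm] using this
  rw [e1, e2, cutW]; ring

/-- Layer-cake / coarea bound. -/
lemma layer_aux (G : SimpleGraph V) (T : Finset V)
    (hT : ∀ a b, G.Adj a b → a ∈ T ∧ b ∈ T) (h : ℝ) (hh : 0 ≤ h)
    (hexp : ∀ S : Finset V, S ⊆ T → S.Nonempty → 2 * S.card ≤ T.card →
      h * S.card ≤ cutW G S (T \ S)) :
    ∀ (k : ℕ) (x : V → ℝ), (∀ v, 0 ≤ x v) →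
      ((T.filter fun v => x v ≠ 0).image x).card ≤ k →
      2 * (T.filter fun v => x v ≠ 0).card ≤ T.card →
      h * ∑ v ∈ T, x v ≤ (1/2) * ∑ a, ∑ b, aW G a b * |x a - x b| := by
  intro k
  induction k with
  | zero =>
    intro x hx hcard _
    have hfe : (T.filter fun v => x v ≠ 0) = ∅ := by
      by_contra hne
      obtain ⟨v, hv⟩ := Finset.nonempty_of_ne_empty hne
      have : x v ∈ (T.filter fun v => x v ≠ 0).image x := Finset.mem_image_of_mem x hv
      have := Finset.card_pos.2 ⟨x v, this⟩
      omega
    have hs0 : ∑ v ∈ T, x v = 0 := by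
      apply Finset.sum_eq_zero
      intro v hv
      by_contra hxv
      have : v ∈ T.filter fun v => x v ≠ 0 := Finset.mem_filter.2 ⟨hv, hxv⟩
      rw [hfe] at this
      exact absurd this (Finset.notMem_empty v)
    rw [hs0, mul_zero]
    have : ∀ a ∈ (Finset.univ : Finset V), 0 ≤ ∑ b, aW G a b * |x a - x b| :=
      fun a _ => Finset.sum_nonneg fun b _ => mul_nonneg (aW_nonneg G a b) (abs_nonneg _)
    nlinarith [Finset.sum_nonneg this]
  | succ k ih =>
    intro x hx hcard hsupp
    by_cases hSne : (T.filter fun v => x v ≠ 0).Nonempty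
    case neg =>
      have hfe : (T.filter fun v => x v ≠ 0) = ∅ := Finset.not_nonempty_iff_eq_empty.1 hSne
      have hs0 : ∑ v ∈ T, x v = 0 := by
        apply Finset.sum_eq_zero
        intro v hv
        by_contra hxv
        have : v ∈ T.filter fun v => x v ≠ 0 := Finset.mem_filter.2 ⟨hv, hxv⟩
        rw [hfe] at this
        exact absurd this (Finset.notMem_empty v)
      rw [hs0, mul_zero]
      have : ∀ a ∈ (Finset.univ : Finset V), 0 ≤ ∑ b, aW G a b * |x a - x b| :=
        fun a _ => Finset.sum_nonneg fun b _ => mul_nonneg (aW_nonneg G a b) (abs_nonneg _)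
      nlinarith [Finset.sum_nonneg this]
    case pos =>
      set S := T.filter fun v => x v ≠ 0 with hSdef
      have hsub : S ⊆ T := Finset.filter_subset _ _
      have himg : (S.image x).Nonempty := hSne.image x
      set c := (S.image x).min' himg with hcdef
      have hc_mem : c ∈ S.image x := Finset.min'_mem _ _
      obtain ⟨v0, hv0S, hv0⟩ := Finset.mem_image.1 hc_mem
      have hv0ne : x v0 ≠ 0 := (Finset.mem_filter.1 hv0S).2
      have hcpos : 0 < c := by
        rw [← hv0]
        exact lt_of_le_of_ne (hx v0) (Ne.symm hv0ne)
      have hcle : ∀ v ∈ S, c ≤ x v := fun v hv => Finset.min'_le _ _ (Finset.mem_image_of_mem x hv)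
      set x' : V → ℝ := fun v => if v ∈ S then x v - c else 0 with hx'def
      have hx' : ∀ v, 0 ≤ x' v := by
        intro v
        simp only [hx'def]
        split
        · next hvS => linarith [hcle v hvS]
        · exact le_refl 0
      have hsupp' : (T.filter fun v => x' v ≠ 0) ⊆ S := by
        intro v hv
        obtain ⟨hvT, hvne⟩ := Finset.mem_filter.1 hv
        by_contra hvS
        simp only [hx'def, if_neg hvS] at hvne
        exact hvne rfl
      have hcard' : ((T.filter fun v => x' v ≠ 0).image x').card ≤ k := by
        have hss : (T.filter fun v => x' v ≠ 0).image x'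
            ⊆ ((S.image x).erase c).image (fun y => y - c) := by
          intro y hy
          obtain ⟨v, hv, rfl⟩ := Finset.mem_image.1 hy
          have hvS : v ∈ S := hsupp' hv
          have hvne : x' v ≠ 0 := (Finset.mem_filter.1 hv).2
          have hxvc : x v ≠ c := by
            intro hc
            apply hvne
            simp [hx'def, hvS, hc]
          refine Finset.mem_image.2 ⟨x v, Finset.mem_erase.2 ⟨hxvc, Finset.mem_image_of_mem x hvS⟩, ?_⟩
          simp [hx'def, hvS]
        calc ((T.filter fun v => x' v ≠ 0).image x').card
            ≤ (((S.image x).erase c).image (fun y => y - c)).card := Finset.card_le_card hss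
          _ ≤ ((S.image x).erase c).card := Finset.card_image_le
          _ = (S.image x).card - 1 := Finset.card_erase_of_mem hc_mem
          _ ≤ k := by omega
      have hsupp2 : 2 * (T.filter fun v => x' v ≠ 0).card ≤ T.card := by
        have := Finset.card_le_card hsupp'
        omega
      have IH := ih x' hx' hcard' hsupp2
      have hcut := hexp S hsub hSne hsupp
      -- pointwise identity
      have paw : ∀ a b : V, aW G a b * |x a - x b|
          = aW G a b * (c * |indF S a - indF S b|) + aW G a b * |x' a - x' b| := by
        intro a b
        by_cases hadj : G.Adj a b
        case neg => rw [aW_eq_zero_of_not_adj hadj]; ring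
        case pos =>
          have haT := (hT a b hadj).1
          have hbT := (hT a b hadj).2
          have hzero : ∀ w ∈ T, w ∉ S → x w = 0 := by
            intro w hwT hwS
            by_contra hne
            exact hwS (Finset.mem_filter.2 ⟨hwT, hne⟩)
          by_cases haS : a ∈ S <;> by_cases hbS : b ∈ S
          · simp only [hx'def, indF, if_pos haS, if_pos hbS]
            rw [show x a - c - (x b - c) = x a - x b by ring]
            rw [sub_self, abs_zero]
            ring
          · have hxb : x b = 0 := hzero b hbT hbS
            simp only [hx'def, indF, if_pos haS, if_neg hbS]
            rw [hxb]
            rw [abs_of_nonneg (by linarith [hcle a haS] : (0:ℝ) ≤ x a - 0),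
              abs_of_nonneg (by linarith [hcle a haS] : (0:ℝ) ≤ x a - c - 0),
              abs_of_nonneg (by norm_num : (0:ℝ) ≤ (1:ℝ) - 0)]
            ring
          · have hxa : x a = 0 := hzero a haT haS
            simp only [hx'def, indF, if_neg haS, if_pos hbS]
            rw [hxa]
            rw [abs_sub_comm (0:ℝ) (x b), abs_sub_comm (0:ℝ) (x b - c), abs_sub_comm (0:ℝ) 1]
            rw [abs_of_nonneg (by linarith [hcle b hbS] : (0:ℝ) ≤ x b - 0),
              abs_of_nonneg (by linarith [hcle b hbS] : (0:ℝ) ≤ x b - c - 0),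
              abs_of_nonneg (by norm_num : (0:ℝ) ≤ (1:ℝ) - 0)]
            ring
          · have hxa : x a = 0 := hzero a haT haS
            have hxb : x b = 0 := hzero b hbT hbS
            simp only [hx'def, indF, if_neg haS, if_neg hbS]
            rw [hxa, hxb]
            simp
      -- sum splitting of the RHS
      have rhs_split : (1/2) * ∑ a, ∑ b, aW G a b * |x a - x b|
          = c * cutW G S (T \ S) + (1/2) * ∑ a, ∑ b, aW G a b * |x' a - x' b| := by
        rw [Finset.sum_congr rfl fun a _ => Finset.sum_congr rfl fun b _ => paw a b]
        have : ∑ a, ∑ b, (aW G a b * (c * |indF S a - indF S b|) + aW G a b * |x' a - x' b|)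
            = (∑ a, ∑ b, aW G a b * (c * |indF S a - indF S b|))
              + ∑ a, ∑ b, aW G a b * |x' a - x' b| := by
          rw [← Finset.sum_add_distrib]
          apply Finset.sum_congr rfl; intro a _
          rw [← Finset.sum_add_distrib]
        rw [this]
        have hfac : ∑ a, ∑ b, aW G a b * (c * |indF S a - indF S b|)
            = c * ∑ a, ∑ b, aW G a b * |indF S a - indF S b| := by
          rw [Finset.mul_sum]
          apply Finset.sum_congr rfl; intro a _
          rw [Finset.mul_sum]
          apply Finset.sum_congr rfl; intro b _
          ring
        rw [hfac, ind_cut G T hT S hsub]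
        ring
      -- sum splitting of the LHS
      have lhs_split : ∑ v ∈ T, x v = c * S.card + ∑ v ∈ T, x' v := by
        have : ∀ v ∈ T, x v = (if v ∈ S then c else 0) + x' v := by
          intro v hvT
          by_cases hvS : v ∈ S
          · simp [hx'def, hvS]
          · have : x v = 0 := by
              by_contra hne
              exact hvS (Finset.mem_filter.2 ⟨hvT, hne⟩)
            simp [hx'def, hvS, this]
        rw [Finset.sum_congr rfl this, Finset.sum_add_distrib]
        congr 1
        rw [Finset.sum_ite_mem, Finset.inter_eq_right.mpr hsub, Finset.sum_const]
        simp [mul_comm]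
      rw [lhs_split, rhs_split, mul_add]
      have t1 : h * (c * S.card) ≤ c * cutW G S (T \ S) := by
        have := mul_le_mul_of_nonneg_left hcut (le_of_lt hcpos)
        calc h * (c * S.card) = c * (h * S.card) := by ring
          _ ≤ c * cutW G S (T \ S) := this
      linarith [IH]

/-- Existence of a median. -/
lemma exists_median (T : Finset V) (f : V → ℝ) (hT : T.Nonempty) :
    ∃ m : ℝ, 2 * (T.filter fun v => m < f v).card ≤ T.card ∧
      2 * (T.filter fun v => f v < m).card ≤ T.card := by
  classical
  set M := (T.image f).filter (fun y => 2 * (T.filter fun v => f v < y).card ≤ T.card) with hM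
  have hMne : M.Nonempty := by
    refine ⟨(T.image f).min' (hT.image f), Finset.mem_filter.2 ⟨Finset.min'_mem _ _, ?_⟩⟩
    have : (T.filter fun v => f v < (T.image f).min' (hT.image f)) = ∅ := by
      apply Finset.filter_false_of_mem
      intro v hv
      have := Finset.min'_le (T.image f) (f v) (Finset.mem_image_of_mem f hv)
      linarith
    rw [this]
    simp
  set m := M.max' hMne with hm
  have hmM : m ∈ M := Finset.max'_mem _ _
  refine ⟨m, ?_, (Finset.mem_filter.1 hmM).2⟩
  by_contra hA
  set A := T.filter fun v => m < f v with hA'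
  have hTA : T.card < 2 * A.card := by omega
  have hAne : A.Nonempty := by
    rw [← Finset.card_pos]
    omega
  set m' := (A.image f).min' (hAne.image f) with hm'
  have hm'mem : m' ∈ A.image f := Finset.min'_mem _ _
  obtain ⟨w, hwA, hw⟩ := Finset.mem_image.1 hm'mem
  have hmm' : m < m' := by
    rw [← hw]
    exact (Finset.mem_filter.1 hwA).2
  have hsub : (T.filter fun v => f v < m') ⊆ T \ A := by
    intro v hv
    obtain ⟨hvT, hvlt⟩ := Finset.mem_filter.1 hv
    refine Finset.mem_sdiff.2 ⟨hvT, ?_⟩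
    intro hvA
    have := Finset.min'_le (A.image f) (f v) (Finset.mem_image_of_mem f hvA)
    linarith
  have hcard : (T.filter fun v => f v < m').card ≤ T.card - A.card := by
    have := Finset.card_le_card hsub
    rwa [Finset.card_sdiff_of_subset (Finset.filter_subset _ _)] at this
  have hAT : A.card ≤ T.card := Finset.card_le_card (Finset.filter_subset _ _)
  have hm'M : m' ∈ M := by
    refine Finset.mem_filter.2 ⟨?_, by omega⟩
    obtain ⟨hwT, -⟩ := Finset.mem_filter.1 hwA
    rw [← hw]
    exact Finset.mem_image_of_mem f hwT
  have := Finset.le_max' M m' hm'M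
  rw [← hm] at this
  linarith

/-- Cheeger-type bound for nonnegative functions with small support. -/
lemma cheeger_nonneg (G : SimpleGraph V) (T : Finset V)
    (hT : ∀ a b, G.Adj a b → a ∈ T ∧ b ∈ T) (h dmax : ℝ) (hh : 0 ≤ h) (hdm : 0 < dmax)
    (hexp : ∀ S : Finset V, S ⊆ T → S.Nonempty → 2 * S.card ≤ T.card →
      h * S.card ≤ cutW G S (T \ S))
    (hdeg : ∀ a, ∑ b, aW G a b ≤ dmax)
    (g : V → ℝ) (hg : ∀ v, 0 ≤ g v)
    (hsupp : 2 * (T.filter fun v => g v ≠ 0).card ≤ T.card) :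
    h^2 / (2*dmax) * ∑ v ∈ T, (g v)^2 ≤ eW G g := by
  classical
  set x : V → ℝ := fun v => (g v)^2 with hxdef
  have hfiltereq : (T.filter fun v => x v ≠ 0) = (T.filter fun v => g v ≠ 0) := by
    apply Finset.filter_congr
    intro v _
    simp [hxdef, pow_eq_zero_iff]
  have hA := layer_aux G T hT h hh hexp ((T.filter fun v => x v ≠ 0).image x).card x
    (fun v => sq_nonneg _) le_rfl (by rw [hfiltereq]; exact hsupp)
  -- Cauchy-Schwarz
  set W := ∑ a, ∑ b, aW G a b * |x a - x b| with hW
  have cs := Finset.sum_mul_sq_le_sq_mul_sq Finset.univ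
    (fun p : V × V => aW G p.1 p.2 * |g p.1 - g p.2|)
    (fun p : V × V => aW G p.1 p.2 * |g p.1 + g p.2|)
  have hWeq : W = ∑ p : V × V, (aW G p.1 p.2 * |g p.1 - g p.2|) * (aW G p.1 p.2 * |g p.1 + g p.2|) := by
    rw [hW, Fintype.sum_prod_type]
    apply Finset.sum_congr rfl; intro a _
    apply Finset.sum_congr rfl; intro b _
    have : (aW G a b * |g a - g b|) * (aW G a b * |g a + g b|)
        = (aW G a b * aW G a b) * (|g a - g b| * |g a + g b|) := by ring
    rw [this, ← abs_mul]
    have h2 : aW G a b * aW G a b = aW G a b := by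
      have := aW_sq G a b
      nlinarith [this]
    rw [h2]
    congr 1
    rw [hxdef]
    congr 1
    ring
  have e1 : ∑ p : V × V, (aW G p.1 p.2 * |g p.1 - g p.2|)^2 = 2 * eW G g := by
    rw [Fintype.sum_prod_type, eW]
    have : ∀ a b : V, (aW G a b * |g a - g b|)^2 = aW G a b * (g a - g b)^2 := by
      intro a b
      rw [mul_pow, aW_sq, sq_abs]
    simp_rw [this]
    ring
  have e2 : ∑ p : V × V, (aW G p.1 p.2 * |g p.1 + g p.2|)^2 ≤ 4 * dmax * ∑ v ∈ T, (g v)^2 := by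
    rw [Fintype.sum_prod_type]
    have step1 : ∀ a b : V, (aW G a b * |g a + g b|)^2 ≤ aW G a b * (2*(g a)^2 + 2*(g b)^2) := by
      intro a b
      rw [mul_pow, aW_sq, sq_abs]
      have h1 : (g a + g b)^2 ≤ 2*(g a)^2 + 2*(g b)^2 := by nlinarith [sq_nonneg (g a - g b)]
      exact mul_le_mul_of_nonneg_left h1 (aW_nonneg G a b)
    have step2 : ∑ a, ∑ b, (aW G a b * |g a + g b|)^2
        ≤ ∑ a, ∑ b, aW G a b * (2*(g a)^2 + 2*(g b)^2) :=
      Finset.sum_le_sum fun a _ => Finset.sum_le_sum fun b _ => step1 a b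
    have step3 : ∑ a, ∑ b, aW G a b * (2*(g a)^2 + 2*(g b)^2)
        = 4 * ∑ a, (∑ b, aW G a b) * (g a)^2 := by
      have swap : ∑ a, ∑ b, aW G a b * (g b)^2 = ∑ a, ∑ b, aW G a b * (g a)^2 := by
        rw [Finset.sum_comm]
        apply Finset.sum_congr rfl; intro a _
        apply Finset.sum_congr rfl; intro b _
        rw [aW_symm]
      have expand : ∑ a, ∑ b, aW G a b * (2*(g a)^2 + 2*(g b)^2)
          = 2 * (∑ a, ∑ b, aW G a b * (g a)^2) + 2 * ∑ a, ∑ b, aW G a b * (g b)^2 := by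
        rw [Finset.mul_sum, Finset.mul_sum, ← Finset.sum_add_distrib]
        apply Finset.sum_congr rfl; intro a _
        rw [Finset.mul_sum, Finset.mul_sum, ← Finset.sum_add_distrib]
        apply Finset.sum_congr rfl; intro b _
        ring
      rw [expand, swap]
      have : ∀ a : V, ∑ b, aW G a b * (g a)^2 = (∑ b, aW G a b) * (g a)^2 := by
        intro a
        rw [Finset.sum_mul]
      simp_rw [this]
      ring
    have step4 : ∑ a, (∑ b, aW G a b) * (g a)^2 ≤ dmax * ∑ v ∈ T, (g v)^2 := by
      have hzero : ∀ a, a ∉ T → (∑ b, aW G a b) = 0 := by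
        intro a haT
        apply Finset.sum_eq_zero
        intro b _
        by_cases hadj : G.Adj a b
        · exact absurd (hT a b hadj).1 haT
        · exact aW_eq_zero_of_not_adj hadj
      have : ∑ a, (∑ b, aW G a b) * (g a)^2 = ∑ a ∈ T, (∑ b, aW G a b) * (g a)^2 := by
        symm
        apply Finset.sum_subset (Finset.subset_univ T)
        intro a _ haT
        rw [hzero a haT, zero_mul]
      rw [this, Finset.mul_sum]
      apply Finset.sum_le_sum
      intro a _
      exact mul_le_mul_of_nonneg_right (hdeg a) (sq_nonneg _)
    calc ∑ a, ∑ b, (aW G a b * |g a + g b|)^2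
        ≤ 4 * ∑ a, (∑ b, aW G a b) * (g a)^2 := by rw [← step3]; exact step2
      _ ≤ 4 * (dmax * ∑ v ∈ T, (g v)^2) := by linarith [step4]
      _ = 4 * dmax * ∑ v ∈ T, (g v)^2 := by ring
  rw [← hWeq] at cs
  -- combine
  set Sg := ∑ v ∈ T, (g v)^2 with hSg
  have hSgnn : 0 ≤ Sg := Finset.sum_nonneg fun v _ => sq_nonneg _
  have hWnn : 0 ≤ W := by
    rw [hW]
    apply Finset.sum_nonneg; intro a _
    apply Finset.sum_nonneg; intro b _
    exact mul_nonneg (aW_nonneg G a b) (abs_nonneg _)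
  have hxT : ∑ v ∈ T, x v = Sg := by rw [hxdef, hSg]
  -- hA already in final form
  have heWnn := eW_nonneg G g
  rcases eq_or_lt_of_le hSgnn with hc | hc
  · rw [← hc, mul_zero]
    exact heWnn
  · have key : W^2 ≤ (2 * eW G g) * (4 * dmax * Sg) := by
      calc W^2 ≤ (∑ p : V × V, (aW G p.1 p.2 * |g p.1 - g p.2|)^2)
            * ∑ p : V × V, (aW G p.1 p.2 * |g p.1 + g p.2|)^2 := cs
        _ ≤ (2 * eW G g) * (4 * dmax * Sg) := by
            apply mul_le_mul (le_of_eq e1) e2 (Finset.sum_nonneg fun p _ => sq_nonneg _)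
            linarith
    have h2 : (h * Sg)^2 ≤ ((1/2) * W)^2 := by
      apply sq_le_sq'
      · nlinarith
      · exact hA
    have h3 : h^2 * Sg^2 ≤ 2 * dmax * eW G g * Sg := by nlinarith
    have h4 : h^2 * Sg ≤ 2 * dmax * eW G g := by
      have := le_of_mul_le_mul_right (by nlinarith : (h^2 * Sg) * Sg ≤ (2 * dmax * eW G g) * Sg) hc
      exact this
    rw [div_mul_eq_mul_div, div_le_iff₀ (by linarith : (0:ℝ) < 2*dmax)]
    nlinarith

lemma max_split_sq (X Y : ℝ) :
    (max X 0 - max Y 0)^2 + (max (-X) 0 - max (-Y) 0)^2 ≤ (X - Y)^2 := by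
  rcases le_or_gt X 0 with h1 | h1 <;> rcases le_or_gt Y 0 with h2 | h2
  · rw [max_eq_right h1, max_eq_right h2, max_eq_left (neg_nonneg.2 h1), max_eq_left (neg_nonneg.2 h2)]
    nlinarith
  · rw [max_eq_right h1, max_eq_left h2.le, max_eq_left (neg_nonneg.2 h1),
      max_eq_right (by linarith : -Y ≤ 0)]
    nlinarith
  · rw [max_eq_left h1.le, max_eq_right h2, max_eq_right (by linarith : -X ≤ 0),
      max_eq_left (neg_nonneg.2 h2)]
    nlinarith
  · rw [max_eq_left h1.le, max_eq_left h2.le, max_eq_right (by linarith : -X ≤ 0),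
      max_eq_right (by linarith : -Y ≤ 0)]
    nlinarith

lemma max_sq_add (X : ℝ) : (max X 0)^2 + (max (-X) 0)^2 = X^2 := by
  rcases le_or_gt X 0 with h1 | h1
  · rw [max_eq_right h1, max_eq_left (neg_nonneg.2 h1)]
    ring
  · rw [max_eq_left h1.le, max_eq_right (by linarith : -X ≤ 0)]
    ring

/-- The Poincaré / Cheeger inequality. -/
lemma cheeger (G : SimpleGraph V) (T : Finset V)
    (hT : ∀ a b, G.Adj a b → a ∈ T ∧ b ∈ T) (h dmax : ℝ) (hh : 0 ≤ h) (hdm : 0 < dmax)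
    (hexp : ∀ S : Finset V, S ⊆ T → S.Nonempty → 2 * S.card ≤ T.card →
      h * S.card ≤ cutW G S (T \ S))
    (hdeg : ∀ a, ∑ b, aW G a b ≤ dmax)
    (f : V → ℝ) (hsum : ∑ v ∈ T, f v = 0) :
    h^2 / (2*dmax) * ∑ v ∈ T, (f v)^2 ≤ eW G f := by
  classical
  have hcoef : 0 ≤ h^2 / (2*dmax) := div_nonneg (sq_nonneg _) (by linarith)
  rcases T.eq_empty_or_nonempty with hTe | hTne
  · rw [hTe]
    simp only [Finset.sum_empty, mul_zero]
    exact eW_nonneg G f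
  obtain ⟨m, hm1, hm2⟩ := exists_median T f hTne
  set gp : V → ℝ := fun v => max (f v - m) 0 with hgp
  set gm : V → ℝ := fun v => max (m - f v) 0 with hgm
  have hgp_nn : ∀ v, 0 ≤ gp v := fun v => le_max_right _ _
  have hgm_nn : ∀ v, 0 ≤ gm v := fun v => le_max_right _ _
  have hgp_supp : (T.filter fun v => gp v ≠ 0) = (T.filter fun v => m < f v) := by
    apply Finset.filter_congr
    intro v _
    rw [hgp]
    simp only [ne_eq, max_eq_right_iff, not_le]
    constructor <;> intro h' <;> linarith
  have hgm_supp : (T.filter fun v => gm v ≠ 0) = (T.filter fun v => f v < m) := by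
    apply Finset.filter_congr
    intro v _
    rw [hgm]
    simp only [ne_eq, max_eq_right_iff, not_le]
    constructor <;> intro h' <;> linarith
  have Bp := cheeger_nonneg G T hT h dmax hh hdm hexp hdeg gp hgp_nn (by rw [hgp_supp]; exact hm1)
  have Bm := cheeger_nonneg G T hT h dmax hh hdm hexp hdeg gm hgm_nn (by rw [hgm_supp]; exact hm2)
  -- energy splitting
  have hsplit : eW G gp + eW G gm ≤ eW G f := by
    unfold eW
    rw [← mul_add]
    apply mul_le_mul_of_nonneg_left _ (by norm_num : (0:ℝ) ≤ 1/2)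
    rw [← Finset.sum_add_distrib]
    apply Finset.sum_le_sum
    intro a _
    rw [← Finset.sum_add_distrib]
    apply Finset.sum_le_sum
    intro b _
    rw [← mul_add]
    apply mul_le_mul_of_nonneg_left _ (aW_nonneg G a b)
    have key := max_split_sq (f a - m) (f b - m)
    have e1 : gp a - gp b = max (f a - m) 0 - max (f b - m) 0 := rfl
    have e2 : gm a - gm b = max (-(f a - m)) 0 - max (-(f b - m)) 0 := by
      rw [hgm]
      simp only
      congr 2 <;> ring_nf
    rw [e1, e2]
    calc (max (f a - m) 0 - max (f b - m) 0)^2 + (max (-(f a - m)) 0 - max (-(f b - m)) 0)^2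
        ≤ ((f a - m) - (f b - m))^2 := key
      _ = (f a - f b)^2 := by ring_nf
  -- sum of squares
  have hsq : ∑ v ∈ T, (gp v)^2 + ∑ v ∈ T, (gm v)^2 = ∑ v ∈ T, (f v - m)^2 := by
    rw [← Finset.sum_add_distrib]
    apply Finset.sum_congr rfl
    intro v _
    have := max_sq_add (f v - m)
    have e2 : gm v = max (-(f v - m)) 0 := by
      rw [hgm]; simp only; congr 1; ring
    rw [hgp, e2]
    simpa using this
  have hshift : ∑ v ∈ T, (f v)^2 ≤ ∑ v ∈ T, (f v - m)^2 := by
    have expand : ∑ v ∈ T, (f v - m)^2 = ∑ v ∈ T, (f v)^2 - 2*m*(∑ v ∈ T, f v) + T.card * m^2 := by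
      rw [Finset.mul_sum]
      rw [show (T.card : ℝ) * m^2 = ∑ v ∈ T, m^2 by rw [Finset.sum_const]; ring]
      rw [← Finset.sum_sub_distrib, ← Finset.sum_add_distrib]
      apply Finset.sum_congr rfl
      intro v _
      ring
    rw [expand, hsum]
    nlinarith [sq_nonneg m, Nat.cast_nonneg (α := ℝ) T.card, sq_nonneg (m * T.card)]
  calc h^2/(2*dmax) * ∑ v ∈ T, (f v)^2
      ≤ h^2/(2*dmax) * ∑ v ∈ T, (f v - m)^2 := mul_le_mul_of_nonneg_left hshift hcoef
    _ = h^2/(2*dmax) * ∑ v ∈ T, (gp v)^2 + h^2/(2*dmax) * ∑ v ∈ T, (gm v)^2 := by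
        rw [← mul_add, hsq]
    _ ≤ eW G gp + eW G gm := add_le_add Bp Bm
    _ ≤ eW G f := hsplit
lemma eW_congr_adj {G : SimpleGraph V} {ψ₁ ψ₂ : V → ℝ}
    (h : ∀ a b, G.Adj a b → ψ₁ a - ψ₁ b = ψ₂ a - ψ₂ b) : eW G ψ₁ = eW G ψ₂ := by
  unfold eW
  congr 1
  apply Finset.sum_congr rfl; intro a _
  apply Finset.sum_congr rfl; intro b _
  by_cases hadj : G.Adj a b
  · rw [h a b hadj]
  · simp [aW, hadj]

lemma eW_sub_const (G : SimpleGraph V) (ψ : V → ℝ) (c : ℝ) :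
    eW G (fun x => ψ x - c) = eW G ψ :=
  eW_congr_adj (fun a b _ => by ring)

/-- Splitting the energy of `G'` into the energy of `dropLast G'` plus the star at `last`. -/
lemma eW_split_last {n : ℕ} (G' : SimpleGraph (Fin (n+1))) (ψ : Fin (n+1) → ℝ) :
    eW G' ψ = eW (dropLast G') ψ
      + ∑ a, aW G' a (Fin.last n) * (ψ a - ψ (Fin.last n))^2 := by
  classical
  set w := Fin.last n with hw
  have key : ∀ a b : Fin (n+1), aW G' a b * (ψ a - ψ b)^2
      = aW (dropLast G') a b * (ψ a - ψ b)^2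
        + (if b = w then aW G' a w * (ψ a - ψ w)^2 else 0)
        + (if a = w then aW G' w b * (ψ w - ψ b)^2 else 0) := by
    intro a b
    by_cases ha : a = w <;> by_cases hb : b = w
    · subst ha; subst hb
      have h1 : ¬ G'.Adj w w := G'.loopless.irrefl w
      have h2 : ¬ (dropLast G').Adj w w := fun h => h1 h.1
      simp [aW, h1, h2]
    · subst ha
      have h2 : ¬ (dropLast G').Adj w b := fun h => h.2.1 rfl
      simp [aW, h2, hb]
    · subst hb
      have h2 : ¬ (dropLast G').Adj a w := fun h => h.2.2 rfl
      simp [aW, h2, ha]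
    · have h2 : aW (dropLast G') a b = aW G' a b := by
        unfold aW dropLast
        simp only
        by_cases hadj : G'.Adj a b
        · rw [if_pos hadj, if_pos ⟨hadj, ha, hb⟩]
        · rw [if_neg hadj, if_neg (fun h => hadj h.1)]
      simp [ha, hb, h2]
  unfold eW
  rw [Finset.sum_congr rfl fun a _ => Finset.sum_congr rfl fun b _ => key a b]
  have expand : ∀ a : Fin (n+1),
      ∑ b, (aW (dropLast G') a b * (ψ a - ψ b)^2
        + (if b = w then aW G' a w * (ψ a - ψ w)^2 else 0)
        + (if a = w then aW G' w b * (ψ w - ψ b)^2 else 0))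
      = (∑ b, aW (dropLast G') a b * (ψ a - ψ b)^2)
        + aW G' a w * (ψ a - ψ w)^2
        + (if a = w then ∑ b, aW G' w b * (ψ w - ψ b)^2 else 0) := by
    intro a
    rw [Finset.sum_add_distrib, Finset.sum_add_distrib]
    congr 1
    · congr 1
      rw [Finset.sum_ite_eq' Finset.univ w (fun _ => aW G' a w * (ψ a - ψ w)^2)]
      simp
    · split
      · rfl
      · simp
  rw [Finset.sum_congr rfl fun a _ => expand a]
  rw [Finset.sum_add_distrib, Finset.sum_add_distrib]
  rw [Finset.sum_ite_eq' Finset.univ w (fun _ => ∑ b, aW G' w b * (ψ w - ψ b)^2)]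
  simp only [Finset.mem_univ, if_true]
  have symmstar : ∑ b, aW G' w b * (ψ w - ψ b)^2 = ∑ a, aW G' a w * (ψ a - ψ w)^2 := by
    apply Finset.sum_congr rfl; intro b _
    rw [aW_symm]
    congr 1
    ring
  rw [symmstar]
  ring

/-- Main deterministic comparison. -/
lemma det_main {n : ℕ} (G' : SimpleGraph (Fin (n+1))) (lam : ℝ) (hlam : 0 < lam)
    (hP : ∀ f : Fin (n+1) → ℝ,
      (∑ x ∈ Finset.univ.erase (Fin.last n), f x) = 0 →
      lam * ∑ x ∈ Finset.univ.erase (Fin.last n), (f x)^2 ≤ eW (dropLast G') f)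
    (u v : Fin (n+1)) (hu : u ≠ Fin.last n) (hv : v ≠ Fin.last n) (huv : u ≠ v) :
    |renRes G' u v - renRes (dropLast G') u v| ≤ 2 / lam^2 := by
  classical
  set T : Finset (Fin (n+1)) := Finset.univ.erase (Fin.last n) with hT
  set Gd := dropLast G' with hGd
  have huT : u ∈ T := Finset.mem_erase.2 ⟨hu, Finset.mem_univ u⟩
  have hvT : v ∈ T := Finset.mem_erase.2 ⟨hv, Finset.mem_univ v⟩
  have hTne : T.Nonempty := ⟨u, huT⟩
  have hTcard : (0:ℝ) < T.card := by exact_mod_cast Finset.card_pos.2 hTne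
  -- mean-zero shifted versions
  have hmean : ∀ k : Fin (n+1) → ℝ, ∑ x ∈ T, (k x - (∑ y ∈ T, k y)/T.card) = 0 := by
    intro k
    rw [Finset.sum_sub_distrib, Finset.sum_const, nsmul_eq_mul]
    field_simp
    ring
  -- kernel property
  have hker : ∀ k : Fin (n+1) → ℝ, lapL Gd k = 0 → k u = k v := by
    intro k hk
    have heW0 : eW Gd k = 0 := by
      rw [← dot_lap_self]
      apply Finset.sum_eq_zero
      intro a _
      have : lap Gd k a = 0 := by rw [← lapL_apply, hk]; rfl
      rw [this, mul_zero]
    set m := (∑ y ∈ T, k y)/T.card with hm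
    have hPk := hP (fun x => k x - m) (hmean k)
    rw [eW_sub_const, heW0] at hPk
    have hsq : ∑ x ∈ T, (k x - m)^2 ≤ 0 := by nlinarith
    have hzero : ∀ x ∈ T, (k x - m)^2 = 0 := by
      intro x hx
      have hnn : ∀ x ∈ T, (0:ℝ) ≤ (k x - m)^2 := fun x _ => sq_nonneg _
      have := Finset.sum_eq_zero_iff_of_nonneg hnn
      have heq : ∑ x ∈ T, (k x - m)^2 = 0 := le_antisymm hsq (Finset.sum_nonneg hnn)
      exact this.1 heq x hx
    have hu' := sub_eq_zero.1 (sq_eq_zero_iff.1 (hzero u huT))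
    have hv' := sub_eq_zero.1 (sq_eq_zero_iff.1 (hzero v hvT))
    rw [hu', hv']
  obtain ⟨φ, hφ⟩ := harmonic_exists Gd u v hker
  obtain ⟨hR2pos, heW2, heff2⟩ := effRes_eq_of_harmonic huv hφ
  set R₂ := φ u - φ v with hR₂
  set m := (∑ y ∈ T, φ y)/T.card with hm
  set fφ : Fin (n+1) → ℝ := fun x => φ x - m with hfφ
  have hPf := hP fφ (hmean φ)
  rw [show eW Gd fφ = eW Gd φ from eW_sub_const Gd φ m, heW2] at hPf
  -- R₂ ≤ 2/lam
  have hsum_pair : (fφ u)^2 + (fφ v)^2 ≤ ∑ x ∈ T, (fφ x)^2 := by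
    have hsub : ({u, v} : Finset (Fin (n+1))) ⊆ T := by
      intro x hx
      rcases Finset.mem_insert.1 hx with rfl | hx
      · exact huT
      · rw [Finset.mem_singleton.1 hx]; exact hvT
    have := Finset.sum_le_sum_of_subset_of_nonneg hsub
      (fun x _ _ => sq_nonneg (fφ x))
    rwa [Finset.sum_pair huv] at this
  have hR2le : R₂ ≤ 2/lam := by
    have h1 : R₂^2 ≤ 2*((fφ u)^2 + (fφ v)^2) := by
      have : fφ u - fφ v = R₂ := by simp only [hfφ, hR₂]; ring
      nlinarith [sq_nonneg (fφ u + fφ v), this]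
    have h2 : lam * ∑ x ∈ T, (fφ x)^2 ≤ R₂ := hPf
    have h3 : ∑ x ∈ T, (fφ x)^2 ≤ R₂ / lam := by
      rw [le_div_iff₀ hlam]; linarith
    have h4a : (2:ℝ)*(fφ u ^ 2 + fφ v ^ 2) ≤ 2 * ∑ x ∈ T, (fφ x)^2 := by linarith
    have h4b : (2:ℝ) * ∑ x ∈ T, (fφ x)^2 ≤ 2*(R₂/lam) := by linarith
    have h4 : R₂^2 ≤ 2*(R₂/lam) := le_trans h1 (le_trans h4a h4b)
    have h5 : lam * R₂^2 ≤ 2*R₂ := by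
      have := mul_le_mul_of_nonneg_left h4 hlam.le
      have e : lam * (2*(R₂/lam)) = 2*R₂ := by field_simp
      linarith [e ▸ this]
    rw [le_div_iff₀ hlam]
    by_contra hcon
    push_neg at hcon
    have := mul_lt_mul_of_pos_right hcon hR2pos
    nlinarith
  -- extended potential
  set ψ' : Fin (n+1) → ℝ := fun x => if x = Fin.last n then 0 else fφ x with hψ'
  have hψu : ψ' u = fφ u := by rw [hψ']; simp [hu]
  have hψv : ψ' v = fφ v := by rw [hψ']; simp [hv]
  have hψuv : ψ' u - ψ' v = R₂ := by rw [hψu, hψv]; simp only [hfφ, hR₂]; ring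
  have heWdψ : eW Gd ψ' = R₂ := by
    have : eW Gd ψ' = eW Gd fφ := by
      apply eW_congr_adj
      intro a b hab
      have ha : a ≠ Fin.last n := hab.2.1
      have hb : b ≠ Fin.last n := hab.2.2
      rw [hψ']
      simp [ha, hb]
    rw [this, show eW Gd fφ = eW Gd φ from eW_sub_const Gd φ m, heW2]
  set D := ∑ a, aW G' a (Fin.last n) * (ψ' a - ψ' (Fin.last n))^2 with hD
  have hDnn : 0 ≤ D := Finset.sum_nonneg fun a _ =>
    mul_nonneg (aW_nonneg G' a _) (sq_nonneg _)
  have hDle : D ≤ ∑ x ∈ T, (fφ x)^2 := by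
    rw [hD]
    have hzero : ∀ a : Fin (n+1), a ∉ T → aW G' a (Fin.last n) * (ψ' a - ψ' (Fin.last n))^2 = 0 := by
      intro a haT
      have ha : a = Fin.last n := by
        by_contra hne
        exact haT (Finset.mem_erase.2 ⟨hne, Finset.mem_univ a⟩)
      rw [ha]
      have hl : ¬ G'.Adj (Fin.last n) (Fin.last n) := G'.loopless.irrefl _
      simp [aW, hl]
    have hstep : ∑ a, aW G' a (Fin.last n) * (ψ' a - ψ' (Fin.last n))^2
        = ∑ a ∈ T, aW G' a (Fin.last n) * (ψ' a - ψ' (Fin.last n))^2 := by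
      symm
      apply Finset.sum_subset (Finset.subset_univ T)
      intro a _ haT
      exact hzero a haT
    rw [hstep]
    apply Finset.sum_le_sum
    intro a haT
    have haL : a ≠ Fin.last n := (Finset.mem_erase.1 haT).1
    have e1 : ψ' a = fφ a := by rw [hψ']; simp [haL]
    have e2 : ψ' (Fin.last n) = 0 := by rw [hψ']; simp
    rw [e1, e2, sub_zero]
    have : aW G' a (Fin.last n) ≤ 1 := by unfold aW; split <;> norm_num
    nlinarith [sq_nonneg (fφ a), aW_nonneg G' a (Fin.last n)]
  have hDle2 : D ≤ R₂/lam := by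
    have h3 : ∑ x ∈ T, (fφ x)^2 ≤ R₂ / lam := by
      rw [le_div_iff₀ hlam]; linarith [hPf]
    linarith
  have heWG' : eW G' ψ' = R₂ + D := by
    rw [eW_split_last G' ψ', ← hGd, heWdψ, hD]
  -- bounds on effRes G'
  have hub : effRes G' u v ≤ ENNReal.ofReal R₂ := by
    rw [← heff2]
    exact effRes_mono (G₁ := Gd) (G₂ := G') (fun a b h => h.1) u v
  have hlb : ENNReal.ofReal (R₂^2/(R₂ + D)) ≤ effRes G' u v := by
    have hpos : 0 < eW G' ψ' := by rw [heWG']; linarith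
    have := effRes_ge_of_potential (G := G') (u := u) (v := v) ψ' hpos
    rw [hψuv, heWG'] at this
    exact this
  have hne : effRes G' u v ≠ ⊤ :=
    ne_top_of_le_ne_top ENNReal.ofReal_ne_top hub
  set R₁ := (effRes G' u v).toReal with hR₁
  have heff1 : effRes G' u v = ENNReal.ofReal R₁ := (ENNReal.ofReal_toReal hne).symm
  have hR1nn : 0 ≤ R₁ := ENNReal.toReal_nonneg
  have hR12 : R₁ ≤ R₂ := by
    rw [heff1] at hub
    exact (ENNReal.ofReal_le_ofReal_iff hR2pos.le).1 hub
  have hxR1 : R₂^2/(R₂ + D) ≤ R₁ := by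
    rw [heff1] at hlb
    exact (ENNReal.ofReal_le_ofReal_iff hR1nn).1 hlb
  -- final computation
  have hren2 : renRes Gd u v = R₂/(R₂+1) := renRes_eq hR2pos.le heff2
  have hren1 : renRes G' u v = R₁/(R₁+1) := renRes_eq hR1nn heff1
  rw [hren1, hren2]
  have hd1 : (0:ℝ) < R₁ + 1 := by linarith
  have hd2 : (0:ℝ) < R₂ + 1 := by linarith
  have hRD : (0:ℝ) < R₂ + D := by linarith
  have hmono : R₁/(R₁+1) ≤ R₂/(R₂+1) := by
    rw [div_le_div_iff₀ hd1 hd2]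
    nlinarith
  rw [abs_sub_comm, abs_of_nonneg (by linarith : (0:ℝ) ≤ R₂/(R₂+1) - R₁/(R₁+1))]
  have s1 : R₂/(R₂+1) - R₁/(R₁+1) = (R₂ - R₁)/((R₁+1)*(R₂+1)) := by
    field_simp
    ring
  have s2 : (R₂ - R₁)/((R₁+1)*(R₂+1)) ≤ R₂ - R₁ := by
    apply div_le_self (by linarith)
    nlinarith
  have s3 : R₂ - R₁ ≤ R₂ - R₂^2/(R₂+D) := by linarith
  have s4 : R₂ - R₂^2/(R₂+D) = R₂*D/(R₂+D) := by
    field_simp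
    ring
  have s5 : R₂*D/(R₂+D) ≤ D := by
    rw [div_le_iff₀ hRD]
    nlinarith
  have s6 : D ≤ 2/lam^2 := by
    rw [le_div_iff₀ (by positivity : (0:ℝ) < lam^2)]
    have e1 : D * lam ≤ R₂ := by
      have := mul_le_mul_of_nonneg_right hDle2 hlam.le
      rwa [div_mul_cancel₀ _ (ne_of_gt hlam)] at this
    have e2 : R₂ * lam ≤ 2 := by
      have := mul_le_mul_of_nonneg_right hR2le hlam.le
      rwa [div_mul_cancel₀ _ (ne_of_gt hlam)] at this
    calc D * lam^2 = (D*lam)*lam := by ring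
      _ ≤ R₂ * lam := mul_le_mul_of_nonneg_right e1 hlam.le
      _ ≤ 2 := e2
  rw [s1]
  linarith [s2, s3, s4, s5, s6]


end DetTheory

section ProbTheory

instance edgeFintype (n : ℕ) : Fintype (EdgeSpace n) := by unfold EdgeSpace; infer_instance

instance (n : ℕ) : MeasurableSingletonClass (EdgeSpace n) := by
  unfold EdgeSpace; infer_instance

instance bernProb (x : ℝ≥0∞) : IsProbabilityMeasure (bernoulliMeasure x) := by
  unfold bernoulliMeasure; infer_instance

instance bernSF (x : ℝ≥0∞) : SigmaFinite (bernoulliMeasure x) := by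
  infer_instance

lemma edge_measurable {n : ℕ} (s : Set (EdgeSpace n)) : MeasurableSet s :=
  (Set.toFinite s).measurableSet

instance erProb (n : ℕ) (p : ℝ) : IsProbabilityMeasure (erMeasure n p) := by
  constructor
  have h : (Measure.pi fun _ : Sym2 (Fin n) => bernoulliMeasure (ENNReal.ofReal p)) Set.univ = 1 := by
    rw [Measure.pi_univ]
    simp only [measure_univ, Finset.prod_const, one_pow]
  exact h

/-- Real weight of a configuration. -/
def erW (q : ℝ) {n : ℕ} (ω : EdgeSpace n) : ℝ := ∏ e, (if ω e then q else 1 - q)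

lemma erW_nonneg {q : ℝ} (hq0 : 0 ≤ q) (hq1 : q ≤ 1) {n : ℕ} (ω : EdgeSpace n) :
    0 ≤ erW q ω :=
  Finset.prod_nonneg fun e _ => by split <;> linarith

lemma bernoulli_singleton {q : ℝ} (hq0 : 0 ≤ q) (hq1 : q ≤ 1) (b : Bool) :
    bernoulliMeasure (ENNReal.ofReal q) {b} = ENNReal.ofReal (if b then q else 1 - q) := by
  have hmin : min (ENNReal.ofReal q) 1 = ENNReal.ofReal q :=
    min_eq_left (by simpa using ENNReal.ofReal_le_one.2 hq1)
  rw [bernoulliMeasure, PMF.toMeasure_apply_singleton _ _ (measurableSet_singleton b)]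
  cases b
  · simp only [PMF.bernoulli_apply, Bool.cond_false, hmin, if_false]
    rw [if_neg Bool.false_ne_true, ENNReal.coe_sub, ENNReal.coe_toNNReal ENNReal.ofReal_ne_top,
      ENNReal.coe_one, ENNReal.ofReal_sub _ hq0, ENNReal.ofReal_one]
  · simp only [PMF.bernoulli_apply, Bool.cond_true, hmin, if_true]
    exact ENNReal.coe_toNNReal ENNReal.ofReal_ne_top

lemma er_singleton {n : ℕ} {q : ℝ} (hq0 : 0 ≤ q) (hq1 : q ≤ 1) (ω₀ : EdgeSpace n) :
    erMeasure n q {ω₀} = ENNReal.ofReal (erW q ω₀) := by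
  have hset : ({ω₀} : Set (EdgeSpace n))
      = Set.pi Set.univ (fun e : Sym2 (Fin n) => ({ω₀ e} : Set Bool)) := by
    ext ω
    constructor
    · rintro rfl
      intro e _
      rfl
    · intro h
      funext e
      exact h e (Set.mem_univ e)
  have h2 : (Measure.pi fun _ : Sym2 (Fin n) => bernoulliMeasure (ENNReal.ofReal q))
      (Set.pi Set.univ (fun e : Sym2 (Fin n) => ({ω₀ e} : Set Bool)))
      = ∏ e : Sym2 (Fin n), bernoulliMeasure (ENNReal.ofReal q) {ω₀ e} :=
    Measure.pi_pi _ _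
  have h3 : erMeasure n q {ω₀}
      = ∏ e : Sym2 (Fin n), bernoulliMeasure (ENNReal.ofReal q) {ω₀ e} := by
    rw [erMeasure]
    rw [show ({ω₀} : Set (EdgeSpace n)) = _ from hset]
    exact h2
  rw [h3, erW, ENNReal.ofReal_prod_of_nonneg (fun e _ => by split <;> linarith)]
  apply Finset.prod_congr rfl
  intro e _
  rw [bernoulli_singleton hq0 hq1]

lemma er_apply {n : ℕ} {q : ℝ} (hq0 : 0 ≤ q) (hq1 : q ≤ 1) (s : Set (EdgeSpace n)) :
    erMeasure n q s = ENNReal.ofReal (∑ ω ∈ Finset.univ.filter (· ∈ s), erW q ω) := by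
  have hset : s = ⋃ ω ∈ Finset.univ.filter (· ∈ s), ({ω} : Set (EdgeSpace n)) := by
    ext ω
    simp
  conv_lhs => rw [hset]
  rw [measure_biUnion_finset ?disj (fun b _ => edge_measurable _)]
  · rw [ENNReal.ofReal_sum_of_nonneg (fun ω _ => erW_nonneg hq0 hq1 ω)]
    exact Finset.sum_congr rfl fun ω _ => er_singleton hq0 hq1 ω
  case disj =>
    intro a _ b _ hab
    simp [Set.disjoint_singleton, hab]

/-- Product-sum factorization over the finite product space. -/
lemma prod_factor {n : ℕ} (F : Sym2 (Fin n) → Bool → ℝ) :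
    ∑ ω : EdgeSpace n, ∏ e, F e (ω e) = ∏ e, (F e false + F e true) := by
  have h1 : ∀ e : Sym2 (Fin n), F e false + F e true = ∑ b : Bool, F e b := by
    intro e
    rw [Fintype.sum_bool]
    ring
  rw [Finset.prod_congr rfl fun e _ => h1 e]
  rw [Finset.prod_univ_sum]
  rw [Fintype.piFinset_univ]
  rfl

lemma filter_and_card {n : ℕ} (E₀ : Finset (Sym2 (Fin n))) (ω : EdgeSpace n) :
    Finset.univ.filter (fun e => e ∈ E₀ ∧ ω e = true) = E₀.filter (fun e => ω e = true) := by
  ext e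
  simp [and_comm]

lemma filter_univ_mem {n : ℕ} (E₀ : Finset (Sym2 (Fin n))) :
    Finset.univ.filter (· ∈ E₀) = E₀ := by
  ext e
  simp

/-- Chernoff lower-tail bound. -/
lemma chernoff_low {n : ℕ} {q : ℝ} (hq0 : 0 < q) (hq1 : q < 1) (E₀ : Finset (Sym2 (Fin n))) :
    erMeasure n q {ω : EdgeSpace n | 2 * ((E₀.filter (fun e => ω e = true)).card : ℝ) ≤ q * E₀.card}
      ≤ ENNReal.ofReal (Real.exp (-(q * E₀.card)/8)) := by
  classical
  set m := E₀.card with hm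
  set t := Real.log 2 with ht
  have ht_pos : 0 < t := Real.log_pos (by norm_num)
  have hexp_negt : Real.exp (-t) = 1/2 := by
    rw [Real.exp_neg, Real.exp_log (by norm_num : (0:ℝ) < 2)]
    norm_num
  set a := q * m / 2 with ha
  set cnt : EdgeSpace n → ℕ := fun ω => (E₀.filter (fun e => ω e = true)).card with hcnt
  set S : Set (EdgeSpace n) := {ω | 2 * ((cnt ω : ℝ)) ≤ q * m} with hS
  rw [er_apply hq0.le hq1.le]
  apply ENNReal.ofReal_le_ofReal
  -- step 1: insert multiplier
  have hmult : ∀ ω ∈ Finset.univ.filter (· ∈ S), erW q ω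
      ≤ Real.exp (t*a) * ((1/2:ℝ)^(cnt ω) * erW q ω) := by
    intro ω hω
    have hωS : ω ∈ S := (Finset.mem_filter.1 hω).2
    have hcle : (cnt ω : ℝ) ≤ a := by
      rw [hS] at hωS
      simp only [Set.mem_setOf_eq] at hωS
      rw [ha]; linarith
    have hK : 1 ≤ Real.exp (t*a) * (1/2:ℝ)^(cnt ω) := by
      have e1 : ((1:ℝ)/2)^(cnt ω) = Real.exp (-(t * cnt ω)) := by
        rw [← hexp_negt, ← Real.exp_nat_mul]
        congr 1
        ring
      rw [e1, ← Real.exp_add]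
      have : 0 ≤ t*a - t*cnt ω := by nlinarith
      calc (1:ℝ) ≤ (t*a + -(t*cnt ω)) + 1 := by linarith
        _ ≤ Real.exp (t*a + -(t * cnt ω)) := Real.add_one_le_exp _
    have hWnn := erW_nonneg hq0.le hq1.le ω
    nlinarith
  calc ∑ ω ∈ Finset.univ.filter (· ∈ S), erW q ω
      ≤ ∑ ω ∈ Finset.univ.filter (· ∈ S), Real.exp (t*a) * ((1/2:ℝ)^(cnt ω) * erW q ω) :=
        Finset.sum_le_sum hmult
    _ ≤ ∑ ω : EdgeSpace n, Real.exp (t*a) * ((1/2:ℝ)^(cnt ω) * erW q ω) := by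
        apply Finset.sum_le_sum_of_subset_of_nonneg (Finset.filter_subset _ _)
        intro ω _ _
        have := erW_nonneg hq0.le hq1.le ω
        positivity
    _ = Real.exp (t*a) * ∑ ω : EdgeSpace n, ((1/2:ℝ)^(cnt ω) * erW q ω) := by
        rw [Finset.mul_sum]
    _ ≤ Real.exp (-(q * m)/8) := ?_
  -- step 2: compute the expectation
  have hpow : ∀ ω : EdgeSpace n, (∏ e, (if e ∈ E₀ ∧ ω e = true then (1/2:ℝ) else 1))
      = (1/2:ℝ)^(cnt ω) := by
    intro ω
    unfold EdgeSpace at ω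
    rw [Finset.prod_ite (fun _ => (1/2:ℝ)) (fun _ => (1:ℝ)), Finset.prod_const,
      Finset.prod_const_one, mul_one]
    congr 1
    convert congrArg Finset.card (filter_and_card E₀ ω)
  have hker : ∀ ω : EdgeSpace n, (1/2:ℝ)^(cnt ω) * erW q ω
      = ∏ e, ((if ω e then q else 1-q) * (if e ∈ E₀ ∧ ω e = true then (1/2:ℝ) else 1)) := by
    intro ω
    rw [Finset.prod_mul_distrib, hpow ω, mul_comm]
    rfl
  have hsum : ∑ ω : EdgeSpace n, ((1/2:ℝ)^(cnt ω) * erW q ω) = (1 - q/2)^m := by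
    rw [Finset.sum_congr rfl fun ω _ => hker ω]
    rw [prod_factor (fun e b => (if b then q else 1-q) * (if e ∈ E₀ ∧ b = true then (1/2:ℝ) else 1))]
    have hfe : ∀ e : Sym2 (Fin n),
        ((if (false:Bool) then q else 1-q) * (if e ∈ E₀ ∧ (false:Bool) = true then (1/2:ℝ) else 1))
        + ((if (true:Bool) then q else 1-q) * (if e ∈ E₀ ∧ (true:Bool) = true then (1/2:ℝ) else 1))
        = if e ∈ E₀ then 1 - q/2 else 1 := by
      intro e
      by_cases he : e ∈ E₀ <;> simp [he] <;> ring
    rw [Finset.prod_congr rfl fun e _ => hfe e]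
    rw [Finset.prod_ite (fun _ => (1 - q/2)) (fun _ => (1:ℝ)), Finset.prod_const,
      Finset.prod_const_one, mul_one, filter_univ_mem]
  rw [hsum]
  -- step 3: numeric estimate
  have h1q2 : (0:ℝ) ≤ 1 - q/2 := by linarith
  have hb1 : (1 - q/2)^m ≤ Real.exp (-(q/2))^m := by
    apply pow_le_pow_left₀ h1q2
    linarith [Real.add_one_le_exp (-(q/2))]
  have hb2 : Real.exp (-(q/2))^m = Real.exp ((m:ℝ) * (-(q/2))) := (Real.exp_nat_mul _ m).symm
  have hqm_nn : (0:ℝ) ≤ q * m := mul_nonneg hq0.le (Nat.cast_nonneg m)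
  have hfinal : Real.exp (t*a) * Real.exp ((m:ℝ) * (-(q/2))) ≤ Real.exp (-(q * m)/8) := by
    rw [← Real.exp_add]
    apply Real.exp_le_exp.2
    rw [ha]
    nlinarith [Real.log_two_lt_d9, hqm_nn]
  have hexp_pos : (0:ℝ) < Real.exp (t*a) := Real.exp_pos _
  calc Real.exp (t*a) * (1 - q/2)^m
      ≤ Real.exp (t*a) * Real.exp ((m:ℝ) * (-(q/2))) := by
        apply mul_le_mul_of_nonneg_left _ hexp_pos.le
        rw [← hb2]
        exact hb1
    _ ≤ Real.exp (-(q * m)/8) := hfinal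

/-- Chernoff upper-tail bound. -/
lemma chernoff_up {n : ℕ} {q : ℝ} (hq0 : 0 < q) (hq1 : q < 1) (E₀ : Finset (Sym2 (Fin n))) :
    erMeasure n q {ω : EdgeSpace n | 2 * (q * E₀.card) ≤ ((E₀.filter (fun e => ω e = true)).card : ℝ)}
      ≤ ENNReal.ofReal (Real.exp (-(q * E₀.card)/3)) := by
  classical
  set m := E₀.card with hm
  set t := Real.log 2 with ht
  have ht_pos : 0 < t := Real.log_pos (by norm_num)
  have hexp_t : Real.exp t = 2 := Real.exp_log (by norm_num : (0:ℝ) < 2)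
  set b := 2 * (q * m) with hb
  set cnt : EdgeSpace n → ℕ := fun ω => (E₀.filter (fun e => ω e = true)).card with hcnt
  set S : Set (EdgeSpace n) := {ω | 2 * (q * m) ≤ (cnt ω : ℝ)} with hS
  rw [er_apply hq0.le hq1.le]
  apply ENNReal.ofReal_le_ofReal
  have hmult : ∀ ω ∈ Finset.univ.filter (· ∈ S), erW q ω
      ≤ Real.exp (-(t*b)) * ((2:ℝ)^(cnt ω) * erW q ω) := by
    intro ω hω
    have hωS : ω ∈ S := (Finset.mem_filter.1 hω).2
    have hcge : b ≤ (cnt ω : ℝ) := by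
      rw [hS] at hωS
      simpa [hb] using hωS
    have hK : 1 ≤ Real.exp (-(t*b)) * (2:ℝ)^(cnt ω) := by
      have e1 : ((2:ℝ))^(cnt ω) = Real.exp (t * cnt ω) := by
        rw [← hexp_t, ← Real.exp_nat_mul]
        congr 1
        ring
      rw [e1, ← Real.exp_add]
      have : 0 ≤ -(t*b) + t*cnt ω := by nlinarith
      calc (1:ℝ) ≤ (-(t*b) + t*cnt ω) + 1 := by linarith
        _ ≤ Real.exp (-(t*b) + t * cnt ω) := Real.add_one_le_exp _
    have hWnn := erW_nonneg hq0.le hq1.le ω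
    nlinarith
  calc ∑ ω ∈ Finset.univ.filter (· ∈ S), erW q ω
      ≤ ∑ ω ∈ Finset.univ.filter (· ∈ S), Real.exp (-(t*b)) * ((2:ℝ)^(cnt ω) * erW q ω) :=
        Finset.sum_le_sum hmult
    _ ≤ ∑ ω : EdgeSpace n, Real.exp (-(t*b)) * ((2:ℝ)^(cnt ω) * erW q ω) := by
        apply Finset.sum_le_sum_of_subset_of_nonneg (Finset.filter_subset _ _)
        intro ω _ _
        have := erW_nonneg hq0.le hq1.le ω
        positivity
    _ = Real.exp (-(t*b)) * ∑ ω : EdgeSpace n, ((2:ℝ)^(cnt ω) * erW q ω) := by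
        rw [Finset.mul_sum]
    _ ≤ Real.exp (-(q * m)/3) := ?_
  have hpow : ∀ ω : EdgeSpace n, (∏ e, (if e ∈ E₀ ∧ ω e = true then (2:ℝ) else 1))
      = (2:ℝ)^(cnt ω) := by
    intro ω
    unfold EdgeSpace at ω
    rw [Finset.prod_ite (fun _ => (2:ℝ)) (fun _ => (1:ℝ)), Finset.prod_const,
      Finset.prod_const_one, mul_one]
    congr 1
    convert congrArg Finset.card (filter_and_card E₀ ω)
  have hker : ∀ ω : EdgeSpace n, (2:ℝ)^(cnt ω) * erW q ω
      = ∏ e, ((if ω e then q else 1-q) * (if e ∈ E₀ ∧ ω e = true then (2:ℝ) else 1)) := by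
    intro ω
    rw [Finset.prod_mul_distrib, hpow ω, mul_comm]
    rfl
  have hsum : ∑ ω : EdgeSpace n, ((2:ℝ)^(cnt ω) * erW q ω) = (1 + q)^m := by
    rw [Finset.sum_congr rfl fun ω _ => hker ω]
    rw [prod_factor (fun e b => (if b then q else 1-q) * (if e ∈ E₀ ∧ b = true then (2:ℝ) else 1))]
    have hfe : ∀ e : Sym2 (Fin n),
        ((if (false:Bool) then q else 1-q) * (if e ∈ E₀ ∧ (false:Bool) = true then (2:ℝ) else 1))
        + ((if (true:Bool) then q else 1-q) * (if e ∈ E₀ ∧ (true:Bool) = true then (2:ℝ) else 1))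
        = if e ∈ E₀ then 1 + q else 1 := by
      intro e
      by_cases he : e ∈ E₀ <;> simp [he] <;> ring
    rw [Finset.prod_congr rfl fun e _ => hfe e]
    rw [Finset.prod_ite (fun _ => (1 + q)) (fun _ => (1:ℝ)), Finset.prod_const,
      Finset.prod_const_one, mul_one, filter_univ_mem]
  rw [hsum]
  have h1q : (0:ℝ) ≤ 1 + q := by linarith
  have hb1 : (1 + q)^m ≤ Real.exp q^m := by
    apply pow_le_pow_left₀ h1q
    linarith [Real.add_one_le_exp q]
  have hb2 : Real.exp q^m = Real.exp ((m:ℝ) * q) := (Real.exp_nat_mul _ m).symm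
  have hqm_nn : (0:ℝ) ≤ q * m := mul_nonneg hq0.le (Nat.cast_nonneg m)
  have hfinal : Real.exp (-(t*b)) * Real.exp ((m:ℝ) * q) ≤ Real.exp (-(q * m)/3) := by
    rw [← Real.exp_add]
    apply Real.exp_le_exp.2
    rw [hb]
    nlinarith [Real.log_two_gt_d9, hqm_nn]
  have hexp_pos : (0:ℝ) < Real.exp (-(t*b)) := Real.exp_pos _
  calc Real.exp (-(t*b)) * (1 + q)^m
      ≤ Real.exp (-(t*b)) * Real.exp ((m:ℝ) * q) := by
        apply mul_le_mul_of_nonneg_left _ hexp_pos.le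
        rw [← hb2]
        exact hb1
    _ ≤ Real.exp (-(q * m)/3) := hfinal


end ProbTheory


section Assembly

/-- The active vertex set: everything except the last vertex. -/
def Tset (n : ℕ) : Finset (Fin (n+1)) := Finset.univ.erase (Fin.last n)

lemma Tcard (n : ℕ) : (Tset n).card = n := by
  rw [Tset, Finset.card_erase_of_mem (Finset.mem_univ _), Finset.card_univ, Fintype.card_fin]
  rfl

lemma sym2_injOn {n : ℕ} (S : Finset (Fin (n+1))) (U : Finset (Fin (n+1)))
    (hdisj : ∀ x, x ∈ S → x ∉ U) :
    Set.InjOn (fun p : Fin (n+1) × Fin (n+1) => s(p.1, p.2)) ↑(S ×ˢ U) := by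
  rintro ⟨a, b⟩ hab ⟨c, d⟩ hcd h
  rw [Finset.mem_coe, Finset.mem_product] at hab hcd
  obtain ⟨haS, hbU⟩ := hab
  obtain ⟨hcS, hdU⟩ := hcd
  simp only at h
  rw [Sym2.eq_iff] at h
  rcases h with ⟨h1, h2⟩ | ⟨h1, h2⟩
  · simp [Prod.ext_iff, h1, h2]
  · exact absurd hdU (h1 ▸ fun hd => hdisj a haS hd)

/-- Coordinates of the potential edges across the cut `(S, Tset n \ S)`. -/
def cutEdges (n : ℕ) (S : Finset (Fin (n+1))) : Finset (Sym2 (Fin (n+1))) :=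
  (S ×ˢ ((Tset n) \ S)).image (fun p => s(p.1, p.2))

lemma cutEdges_card {n : ℕ} (S : Finset (Fin (n+1))) :
    (cutEdges n S).card = S.card * ((Tset n) \ S).card := by
  rw [cutEdges, Finset.card_image_of_injOn
    (sym2_injOn S _ (fun x hx hx' => (Finset.mem_sdiff.1 hx').2 hx)), Finset.card_product]

lemma cut_count {n : ℕ} (ω : EdgeSpace (n+1)) (S : Finset (Fin (n+1))) (hS : S ⊆ Tset n) :
    cutW (dropLast (graphOf ω)) S ((Tset n) \ S)
      = (((cutEdges n S).filter (fun e => ω e = true)).card : ℝ) := by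
  have step1 : cutW (dropLast (graphOf ω)) S ((Tset n) \ S)
      = ∑ p ∈ S ×ˢ ((Tset n) \ S), (if ω s(p.1, p.2) = true then (1:ℝ) else 0) := by
    rw [cutW, ← Finset.sum_product']
    apply Finset.sum_congr rfl
    rintro ⟨a, b⟩ hab
    rw [Finset.mem_product] at hab
    obtain ⟨ha, hb⟩ := hab
    have haT : a ∈ Tset n := hS ha
    have hbT : b ∈ Tset n := (Finset.mem_sdiff.1 hb).1
    have habne : a ≠ b := fun h => (Finset.mem_sdiff.1 hb).2 (h ▸ ha)
    have halast : a ≠ Fin.last n := (Finset.mem_erase.1 haT).1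
    have hblast : b ≠ Fin.last n := (Finset.mem_erase.1 hbT).1
    unfold aW
    by_cases hω : ω s(a, b) = true
    · rw [if_pos ⟨⟨habne, hω⟩, halast, hblast⟩, if_pos hω]
    · rw [if_neg (fun h => hω h.1.2), if_neg hω]
  have hc : ((S ×ˢ ((Tset n) \ S)).filter (fun p => ω s(p.1, p.2) = true)).card
      = ((cutEdges n S).filter (fun e => ω e = true)).card := by
    rw [cutEdges, Finset.filter_image]
    convert (Finset.card_image_of_injOn
      ((sym2_injOn S _ (fun x hx hx' => (Finset.mem_sdiff.1 hx').2 hx)).mono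
        (Finset.coe_subset.2 (Finset.filter_subset (fun p : Fin (n+1) × Fin (n+1) => ω s(p.1, p.2) = true) (S ×ˢ ((Tset n) \ S)))))).symm
  rw [step1, Finset.sum_boole, hc]

/-- Coordinates of the potential edges at a vertex. -/
def degEdges (n : ℕ) (a : Fin (n+1)) : Finset (Sym2 (Fin (n+1))) :=
  (Finset.univ.erase a).image (fun b => s(a, b))

lemma degEdges_card {n : ℕ} (a : Fin (n+1)) : (degEdges n a).card = n := by
  rw [degEdges, Finset.card_image_of_injOn]
  · rw [Finset.card_erase_of_mem (Finset.mem_univ _), Finset.card_univ, Fintype.card_fin]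
    rfl
  · intro b hb c hc h
    simp only [Finset.coe_erase, Set.mem_diff, Finset.mem_coe, Set.mem_singleton_iff] at hb hc
    rw [Sym2.eq_iff] at h
    rcases h with ⟨-, h2⟩ | ⟨h1, h2⟩
    · exact h2
    · exact absurd h2 hb.2

lemma deg_count {n : ℕ} (ω : EdgeSpace (n+1)) (a : Fin (n+1)) :
    ∑ b, aW (graphOf ω) a b = (((degEdges n a).filter (fun e => ω e = true)).card : ℝ) := by
  have step0 : ∑ b, aW (graphOf ω) a b = ∑ b ∈ Finset.univ.erase a, aW (graphOf ω) a b := by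
    rw [← Finset.add_sum_erase Finset.univ _ (Finset.mem_univ a)]
    have : aW (graphOf ω) a a = 0 := by
      unfold aW
      rw [if_neg ((graphOf ω).loopless.irrefl a)]
    rw [this, zero_add]
  have step1 : ∑ b ∈ Finset.univ.erase a, aW (graphOf ω) a b
      = ∑ b ∈ Finset.univ.erase a, (if ω s(a, b) = true then (1:ℝ) else 0) := by
    apply Finset.sum_congr rfl
    intro b hb
    have hne : a ≠ b := fun h => (Finset.mem_erase.1 hb).1 h.symm
    unfold aW
    by_cases hω : ω s(a, b) = true
    · rw [if_pos ⟨hne, hω⟩, if_pos hω]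
    · rw [if_neg (fun h => hω h.2), if_neg hω]
  rw [step0, step1, Finset.sum_boole]
  congr 1
  rw [degEdges, Finset.filter_image]
  rw [Finset.card_image_of_injOn]
  · convert rfl
  intro b hb c hc h
  simp only [Finset.coe_filter, Set.mem_setOf_eq, Finset.mem_erase] at hb hc
  rw [Sym2.eq_iff] at h
  rcases h with ⟨-, h2⟩ | ⟨h1, h2⟩
  · exact h2
  · exact absurd h2 hb.1.1

/-- The bad event for expansion. -/
def ExpBadSet (n : ℕ) (q : ℝ) : Set (EdgeSpace (n+1)) :=
  {ω | ¬ ∀ S : Finset (Fin (n+1)), S ⊆ Tset n → S.Nonempty → 2 * S.card ≤ n →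
    ((n:ℝ) * q / 4) * S.card ≤ cutW (dropLast (graphOf ω)) S ((Tset n) \ S)}

/-- The bad event for degrees. -/
def DegBadSet (n : ℕ) (q : ℝ) : Set (EdgeSpace (n+1)) :=
  {ω | ¬ ∀ a : Fin (n+1), ∑ b, aW (graphOf ω) a b ≤ 2 * (q * n)}

lemma expbad_measure {n : ℕ} {q : ℝ} (hq0 : 0 < q) (hq1 : q < 1) :
    erMeasure (n+1) q (ExpBadSet n q)
      ≤ ENNReal.ofReal ((1 + Real.exp (-(q * n)/16))^n - 1) := by
  classical
  set cand := (Tset n).powerset.filter (fun S => S.Nonempty ∧ 2 * S.card ≤ n) with hcand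
  have hsub : ExpBadSet n q ⊆ ⋃ S ∈ cand,
      {ω : EdgeSpace (n+1) | 2 * (((cutEdges n S).filter (fun e => ω e = true)).card : ℝ)
        ≤ q * (cutEdges n S).card} := by
    intro ω hω
    rw [ExpBadSet, Set.mem_setOf_eq] at hω
    push_neg at hω
    obtain ⟨S, hS, hSne, hShalf, hcut⟩ := hω
    rw [Set.mem_iUnion]
    refine ⟨S, ?_⟩
    rw [Set.mem_iUnion]
    refine ⟨Finset.mem_filter.2 ⟨Finset.mem_powerset.2 hS, hSne, hShalf⟩, ?_⟩
    rw [Set.mem_setOf_eq]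
    rw [← cut_count ω S hS, cutEdges_card]
    have hsd : (((Tset n) \ S).card : ℝ) = (n : ℝ) - S.card := by
      rw [Finset.card_sdiff_of_subset hS, Tcard]
      have := Finset.card_le_card hS
      rw [Tcard] at this
      push_cast [Nat.cast_sub this]
      ring
    have hhalf : (S.card : ℝ) ≤ (n:ℝ)/2 := by
      have : (2:ℝ) * S.card ≤ n := by exact_mod_cast hShalf
      linarith
    have hSnn : (0:ℝ) ≤ S.card := Nat.cast_nonneg _
    push_cast
    rw [hsd]
    nlinarith [hcut, mul_nonneg (mul_nonneg hq0.le hSnn)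
      (show (0:ℝ) ≤ ((n:ℝ) - S.card) - (n:ℝ)/2 by linarith)]
  calc erMeasure (n+1) q (ExpBadSet n q)
      ≤ erMeasure (n+1) q (⋃ S ∈ cand, {ω : EdgeSpace (n+1) |
          2 * (((cutEdges n S).filter (fun e => ω e = true)).card : ℝ)
            ≤ q * (cutEdges n S).card}) := measure_mono hsub
    _ ≤ ∑ S ∈ cand, erMeasure (n+1) q {ω : EdgeSpace (n+1) |
          2 * (((cutEdges n S).filter (fun e => ω e = true)).card : ℝ)
            ≤ q * (cutEdges n S).card} := measure_biUnion_finset_le _ _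
    _ ≤ ∑ S ∈ cand, ENNReal.ofReal (Real.exp (-(q * n)/16) ^ S.card) := ?_
    _ = ENNReal.ofReal (∑ S ∈ cand, Real.exp (-(q * n)/16) ^ S.card) := by
        rw [ENNReal.ofReal_sum_of_nonneg (fun S _ => pow_nonneg (Real.exp_pos _).le _)]
    _ ≤ ENNReal.ofReal ((1 + Real.exp (-(q * n)/16))^n - 1) := ?_
  · -- per-S Chernoff
    apply Finset.sum_le_sum
    intro S hScand
    obtain ⟨hSpow, hSne, hShalf⟩ := Finset.mem_filter.1 hScand
    have hS : S ⊆ Tset n := Finset.mem_powerset.1 hSpow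
    refine le_trans (chernoff_low hq0 hq1 (cutEdges n S)) ?_
    apply ENNReal.ofReal_le_ofReal
    have hcard : ((cutEdges n S).card : ℝ) = S.card * ((n:ℝ) - S.card) := by
      rw [cutEdges_card, Finset.card_sdiff_of_subset hS, Tcard]
      have := Finset.card_le_card hS
      rw [Tcard] at this
      push_cast [Nat.cast_sub this]
      ring
    have hexp_eq : Real.exp (-(q * n)/16) ^ S.card = Real.exp ((S.card : ℝ) * (-(q * n)/16)) :=
      (Real.exp_nat_mul _ _).symm
    rw [hexp_eq]
    apply Real.exp_le_exp.2
    rw [hcard]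
    have hhalf : (S.card : ℝ) ≤ (n:ℝ)/2 := by
      have : (2:ℝ) * S.card ≤ n := by exact_mod_cast hShalf
      linarith
    have hSnn : (0:ℝ) ≤ S.card := Nat.cast_nonneg _
    nlinarith [mul_nonneg (mul_nonneg hq0.le hSnn)
      (show (0:ℝ) ≤ ((n:ℝ) - S.card) - (n:ℝ)/2 by linarith)]
  · -- binomial sum
    apply ENNReal.ofReal_le_ofReal
    set r := Real.exp (-(q * n)/16) with hr
    have hrnn : 0 ≤ r := (Real.exp_pos _).le
    have hsum_all : ∑ S ∈ (Tset n).powerset, r ^ S.card = (r + 1)^n := by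
      have := Finset.prod_add (fun _ : Fin (n+1) => r) (fun _ => (1:ℝ)) (Tset n)
      rw [Finset.prod_const, Tcard] at this
      rw [this]
      apply Finset.sum_congr rfl
      intro S _
      rw [Finset.prod_const, Finset.prod_const_one, mul_one]
    have hmem : ∅ ∈ (Tset n).powerset := Finset.empty_mem_powerset _
    have hsum_erase : ∑ S ∈ (Tset n).powerset.erase ∅, r ^ S.card = (r + 1)^n - 1 := by
      have := Finset.sum_erase_add (Tset n).powerset (fun S => r ^ S.card) hmem
      rw [hsum_all] at this
      simp only [Finset.card_empty, pow_zero] at this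
      linarith
    have hcand_sub : cand ⊆ (Tset n).powerset.erase ∅ := by
      intro S hScand
      obtain ⟨hSpow, hSne, -⟩ := Finset.mem_filter.1 hScand
      exact Finset.mem_erase.2 ⟨Finset.nonempty_iff_ne_empty.1 hSne, hSpow⟩
    calc ∑ S ∈ cand, r ^ S.card
        ≤ ∑ S ∈ (Tset n).powerset.erase ∅, r ^ S.card :=
          Finset.sum_le_sum_of_subset_of_nonneg hcand_sub (fun S _ _ => pow_nonneg hrnn _)
      _ = (r + 1)^n - 1 := hsum_erase
      _ = (1 + r)^n - 1 := by rw [add_comm]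

lemma degbad_measure {n : ℕ} {q : ℝ} (hq0 : 0 < q) (hq1 : q < 1) :
    erMeasure (n+1) q (DegBadSet n q)
      ≤ (n + 1 : ℝ≥0∞) * ENNReal.ofReal (Real.exp (-(q * n)/3)) := by
  classical
  have hsub : DegBadSet n q ⊆ ⋃ a ∈ (Finset.univ : Finset (Fin (n+1))),
      {ω : EdgeSpace (n+1) | 2 * (q * (degEdges n a).card)
        ≤ (((degEdges n a).filter (fun e => ω e = true)).card : ℝ)} := by
    intro ω hω
    rw [DegBadSet, Set.mem_setOf_eq] at hω
    push_neg at hω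
    obtain ⟨a, ha⟩ := hω
    rw [Set.mem_iUnion]
    refine ⟨a, ?_⟩
    rw [Set.mem_iUnion]
    refine ⟨Finset.mem_univ a, ?_⟩
    rw [Set.mem_setOf_eq, degEdges_card, ← deg_count ω a]
    linarith
  calc erMeasure (n+1) q (DegBadSet n q)
      ≤ erMeasure (n+1) q (⋃ a ∈ (Finset.univ : Finset (Fin (n+1))),
          {ω : EdgeSpace (n+1) | 2 * (q * (degEdges n a).card)
            ≤ (((degEdges n a).filter (fun e => ω e = true)).card : ℝ)}) := measure_mono hsub
    _ ≤ ∑ a : Fin (n+1), erMeasure (n+1) q {ω : EdgeSpace (n+1) |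
          2 * (q * (degEdges n a).card)
            ≤ (((degEdges n a).filter (fun e => ω e = true)).card : ℝ)} :=
        measure_biUnion_finset_le _ _
    _ ≤ ∑ _a : Fin (n+1), ENNReal.ofReal (Real.exp (-(q * n)/3)) := ?_
    _ = (n + 1 : ℝ≥0∞) * ENNReal.ofReal (Real.exp (-(q * n)/3)) := by
        rw [Finset.sum_const, Finset.card_univ, Fintype.card_fin, nsmul_eq_mul]
        norm_num
  apply Finset.sum_le_sum
  intro a _
  refine le_trans (chernoff_up hq0 hq1 (degEdges n a)) ?_
  rw [degEdges_card]

end Assembly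


section Glue

lemma good_implies {n : ℕ} {q : ℝ} (hq0 : 0 < q) (hq1 : q < 1) (ω : EdgeSpace (n+1))
    (hexpg : ω ∉ ExpBadSet n q) (hdegg : ω ∉ DegBadSet n q)
    (u v : Fin (n+1)) (hu : u ≠ Fin.last n) (hv : v ≠ Fin.last n) (huv : u ≠ v) :
    |renRes (graphOf ω) u v - renRes (dropLast (graphOf ω)) u v| ≤ 8192 / ((n:ℝ) * q)^2 := by
  classical
  have hn2 : 2 ≤ n := by
    have hsub : ({u, v} : Finset (Fin (n+1))) ⊆ Tset n := by
      intro x hx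
      rcases Finset.mem_insert.1 hx with rfl | hx
      · exact Finset.mem_erase.2 ⟨hu, Finset.mem_univ _⟩
      · rw [Finset.mem_singleton.1 hx]
        exact Finset.mem_erase.2 ⟨hv, Finset.mem_univ _⟩
    have hc := Finset.card_le_card hsub
    rw [Tcard, Finset.card_pair huv] at hc
    exact hc
  have hnpos : (0:ℝ) < n := by
    have : (2:ℝ) ≤ n := by exact_mod_cast hn2
    linarith
  simp only [ExpBadSet, Set.mem_setOf_eq, not_not] at hexpg
  simp only [DegBadSet, Set.mem_setOf_eq, not_not] at hdegg
  set G' := graphOf ω with hG'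
  set Gd := dropLast G' with hGdd
  set h := (n:ℝ) * q / 4 with hhdef
  set dmax := 2 * (q * (n:ℝ)) with hdmaxdef
  have hT : ∀ a b, Gd.Adj a b → a ∈ Tset n ∧ b ∈ Tset n := by
    intro a b hab
    exact ⟨Finset.mem_erase.2 ⟨hab.2.1, Finset.mem_univ _⟩,
      Finset.mem_erase.2 ⟨hab.2.2, Finset.mem_univ _⟩⟩
  have hexp' : ∀ S : Finset (Fin (n+1)), S ⊆ Tset n → S.Nonempty →
      2 * S.card ≤ (Tset n).card → h * S.card ≤ cutW Gd S ((Tset n) \ S) := by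
    intro S h1 h2 h3
    rw [Tcard] at h3
    exact hexpg S h1 h2 h3
  have hdeg' : ∀ a, ∑ b, aW Gd a b ≤ dmax := by
    intro a
    have hle : ∀ b, aW Gd a b ≤ aW G' a b := by
      intro b
      unfold aW
      by_cases hadj : Gd.Adj a b
      · rw [if_pos hadj, if_pos hadj.1]
      · rw [if_neg hadj]
        split <;> norm_num
    calc ∑ b, aW Gd a b ≤ ∑ b, aW G' a b := Finset.sum_le_sum (fun b _ => hle b)
      _ ≤ dmax := hdegg a
  have hhpos : 0 < h := by
    rw [hhdef]
    exact div_pos (mul_pos hnpos hq0) (by norm_num)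
  have hdm : 0 < dmax := by
    rw [hdmaxdef]
    nlinarith
  have hP := cheeger Gd (Tset n) hT h dmax hhpos.le hdm hexp' hdeg'
  set lam := h^2/(2*dmax) with hlamdef
  have hlam : 0 < lam := div_pos (pow_pos hhpos 2) (by linarith)
  have hP' : ∀ f : Fin (n+1) → ℝ,
      (∑ x ∈ Finset.univ.erase (Fin.last n), f x) = 0 →
      lam * ∑ x ∈ Finset.univ.erase (Fin.last n), (f x)^2 ≤ eW (dropLast G') f := by
    intro f hf
    exact hP f hf
  have hmain := det_main G' lam hlam hP' u v hu hv huv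
  have hqne : q ≠ 0 := ne_of_gt hq0
  have hnne : (n:ℝ) ≠ 0 := ne_of_gt hnpos
  have hlam_eq : lam = (n:ℝ) * q / 64 := by
    rw [hlamdef, hhdef, hdmaxdef]
    field_simp
    ring
  have h2lam : 2/lam^2 = 8192 / ((n:ℝ) * q)^2 := by
    rw [hlam_eq]
    rw [div_pow]
    rw [div_div_eq_mul_div]
    congr 1
    · norm_num
  rw [h2lam] at hmain
  exact hmain

end Glue

/-- for `G_{n+1} ~ G(n+1,pₙ)` with `pₙ = ω(log n / n)` and `G_n` its induced
subgraph on `{1,…,n}`, w.h.p. all renormalized effective resistances between vertices of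
`{1,…,n}` change by at most `c/d̄²`, where `d̄ = (n-1)pₙ`. -/
theorem er_renRes_perturbation_new_vertex (p : ℕ → ℝ)
    (hp : ∀ n, p n ∈ Set.Ioo (0 : ℝ) 1)
    (hpω : Tendsto (fun n : ℕ => p n * n / Real.log n) atTop atTop) :
    ∃ c > (0 : ℝ), Tendsto (fun n : ℕ =>
        erMeasure (n + 1) (p n) {ω : EdgeSpace (n + 1) |
          ∀ u v : Fin (n + 1), u ≠ Fin.last n → v ≠ Fin.last n → u < v →
            |renRes (graphOf ω) u v - renRes (dropLast (graphOf ω)) u v|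
              ≤ c / (((n : ℝ) - 1) * p n) ^ 2})
      atTop (𝓝 1) := by
  classical
  refine ⟨8192, by norm_num, ?_⟩
  have hq0 : ∀ n, 0 < p n := fun n => (hp n).1
  have hq1 : ∀ n, p n < 1 := fun n => (hp n).2
  set Tgt : ∀ n : ℕ, Set (EdgeSpace (n+1)) := fun n =>
    {ω : EdgeSpace (n + 1) |
      ∀ u v : Fin (n + 1), u ≠ Fin.last n → v ≠ Fin.last n → u < v →
        |renRes (graphOf ω) u v - renRes (dropLast (graphOf ω)) u v|
          ≤ 8192 / (((n : ℝ) - 1) * p n) ^ 2} with hTgt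
  -- inclusion of the good event in the target event
  have hsub : ∀ n : ℕ, (ExpBadSet n (p n) ∪ DegBadSet n (p n))ᶜ ⊆ Tgt n := by
    intro n ω hω u v hu hv hlt
    have huv : u ≠ v := ne_of_lt hlt
    rw [Set.mem_compl_iff, Set.mem_union] at hω
    push_neg at hω
    have hg := good_implies (hq0 n) (hq1 n) ω hω.1 hω.2 u v hu hv huv
    refine le_trans hg ?_
    have hn2 : 2 ≤ n := by
      have hsub2 : ({u, v} : Finset (Fin (n+1))) ⊆ Tset n := by
        intro x hx
        rcases Finset.mem_insert.1 hx with rfl | hx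
        · exact Finset.mem_erase.2 ⟨hu, Finset.mem_univ _⟩
        · rw [Finset.mem_singleton.1 hx]
          exact Finset.mem_erase.2 ⟨hv, Finset.mem_univ _⟩
      have hc := Finset.card_le_card hsub2
      rw [Tcard, Finset.card_pair huv] at hc
      exact hc
    have hn2' : (2:ℝ) ≤ n := by exact_mod_cast hn2
    have hpos : (0:ℝ) < (((n : ℝ) - 1) * p n)^2 := by
      have : (0:ℝ) < ((n:ℝ) - 1) * p n := mul_pos (by linarith) (hq0 n)
      positivity
    have hle : (((n : ℝ) - 1) * p n)^2 ≤ ((n:ℝ) * p n)^2 := by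
      apply pow_le_pow_left₀ (le_of_lt (mul_pos (by linarith) (hq0 n)))
      apply mul_le_mul_of_nonneg_right (by linarith) (hq0 n).le
    exact div_le_div_of_nonneg_left (by norm_num) hpos hle
  -- complement measure bound
  set δ : ℕ → ℝ := fun n =>
    ((1 + Real.exp (-(p n * n)/16))^n - 1) + ((n:ℝ)+1) * Real.exp (-(p n * n)/3) with hδdef
  have hδ1nn : ∀ n : ℕ, 0 ≤ (1 + Real.exp (-(p n * n)/16))^n - 1 := by
    intro n
    have h1 : (1:ℝ) ≤ (1 + Real.exp (-(p n * n)/16))^n := by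
      have := pow_le_pow_left₀ (by norm_num : (0:ℝ) ≤ 1)
        (by linarith [(Real.exp_pos (-(p n * n)/16)).le] : (1:ℝ) ≤ 1 + Real.exp (-(p n * n)/16)) n
      rwa [one_pow] at this
    linarith
  have hbound : ∀ n : ℕ, erMeasure (n+1) (p n) ((Tgt n)ᶜ) ≤ ENNReal.ofReal (δ n) := by
    intro n
    have h1 : (Tgt n)ᶜ ⊆ ExpBadSet n (p n) ∪ DegBadSet n (p n) := by
      rw [← compl_compl (ExpBadSet n (p n) ∪ DegBadSet n (p n))]
      exact Set.compl_subset_compl.2 (hsub n)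
    calc erMeasure (n+1) (p n) ((Tgt n)ᶜ)
        ≤ erMeasure (n+1) (p n) (ExpBadSet n (p n) ∪ DegBadSet n (p n)) := measure_mono h1
      _ ≤ erMeasure (n+1) (p n) (ExpBadSet n (p n)) + erMeasure (n+1) (p n) (DegBadSet n (p n)) :=
          measure_union_le _ _
      _ ≤ ENNReal.ofReal ((1 + Real.exp (-(p n * n)/16))^n - 1)
          + (n + 1 : ℝ≥0∞) * ENNReal.ofReal (Real.exp (-(p n * n)/3)) := by
          apply add_le_add
          · exact expbad_measure (hq0 n) (hq1 n)
          · exact degbad_measure (hq0 n) (hq1 n)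
      _ = ENNReal.ofReal (δ n) := by
          rw [hδdef]
          have e1 : (n + 1 : ℝ≥0∞) * ENNReal.ofReal (Real.exp (-(p n * n)/3))
              = ENNReal.ofReal (((n:ℝ)+1) * Real.exp (-(p n * n)/3)) := by
            rw [ENNReal.ofReal_mul (by positivity)]
            congr 1
            rw [ENNReal.ofReal_add (Nat.cast_nonneg n) zero_le_one, ENNReal.ofReal_natCast,
              ENNReal.ofReal_one]
          rw [e1, ← ENNReal.ofReal_add (hδ1nn n) (by positivity)]
  -- asymptotics
  have hev : ∀ᶠ n : ℕ in atTop, 32 * Real.log n ≤ p n * n ∧ 1 ≤ Real.log n := by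
    have h1 := hpω.eventually_ge_atTop 32
    have h2 : ∀ᶠ n : ℕ in atTop, 3 ≤ n := eventually_ge_atTop 3
    filter_upwards [h1, h2] with n h32 h3
    have hn3 : (3:ℝ) ≤ n := by exact_mod_cast h3
    have hlog1 : 1 ≤ Real.log n := by
      have he : (1:ℝ) < Real.log 3 :=
        (Real.lt_log_iff_exp_lt (by norm_num)).2
          (lt_of_lt_of_le Real.exp_one_lt_d9 (by norm_num))
      have hmono : Real.log 3 ≤ Real.log n := Real.log_le_log (by norm_num) hn3
      linarith
    have hlogpos : (0:ℝ) < Real.log n := by linarith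
    refine ⟨?_, hlog1⟩
    rw [le_div_iff₀ hlogpos] at h32
    linarith
  have hA : Tendsto (fun n : ℕ => (n:ℝ) * Real.exp (-(p n * n)/16)) atTop (𝓝 0) := by
    apply tendsto_of_tendsto_of_tendsto_of_le_of_le' tendsto_const_nhds
      tendsto_one_div_atTop_nhds_zero_nat
    · filter_upwards with n
      positivity
    · filter_upwards [hev, eventually_ge_atTop 1] with n hn h1n
      obtain ⟨h32, hlog⟩ := hn
      have hn0 : (0:ℝ) < n := by exact_mod_cast h1n
      have he : Real.exp (-(p n * n)/16) ≤ Real.exp (-(2 * Real.log n)) := by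
        apply Real.exp_le_exp.2
        linarith
      have he2 : Real.exp (-(2 * Real.log n)) = 1/(n:ℝ)^2 := by
        rw [Real.exp_neg, two_mul, Real.exp_add, Real.exp_log hn0, one_div, sq]
      calc (n:ℝ) * Real.exp (-(p n * n)/16) ≤ (n:ℝ) * (1/(n:ℝ)^2) := by
            apply mul_le_mul_of_nonneg_left _ hn0.le
            rw [← he2]
            exact he
        _ = 1/(n:ℝ) := by
            field_simp
  have hup : Tendsto (fun n : ℕ =>
      (Real.exp ((n:ℝ) * Real.exp (-(p n * n)/16)) - 1) + 1/(n:ℝ)) atTop (𝓝 0) := by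
    have h1 : Tendsto (fun n : ℕ => Real.exp ((n:ℝ) * Real.exp (-(p n * n)/16)) - 1)
        atTop (𝓝 0) := by
      have := (Real.continuous_exp.tendsto 0).comp hA
      rw [Real.exp_zero] at this
      have h2 := this.sub_const 1
      simpa using h2
    have := h1.add tendsto_one_div_atTop_nhds_zero_nat
    simpa using this
  have hδle : ∀ᶠ n : ℕ in atTop, δ n ≤
      (Real.exp ((n:ℝ) * Real.exp (-(p n * n)/16)) - 1) + 1/(n:ℝ) := by
    filter_upwards [hev, eventually_ge_atTop 2] with n hn h2n
    obtain ⟨h32, hlog⟩ := hn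
    have hn0 : (0:ℝ) < n := by
      have : (2:ℝ) ≤ n := by exact_mod_cast h2n
      linarith
    have hn2' : (2:ℝ) ≤ n := by exact_mod_cast h2n
    rw [hδdef]
    set r := Real.exp (-(p n * n)/16) with hr
    have hrpos : 0 < r := Real.exp_pos _
    have hd1 : (1 + r)^n - 1 ≤ Real.exp ((n:ℝ) * r) - 1 := by
      have hb : (1 + r)^n ≤ Real.exp r ^ n := by
        apply pow_le_pow_left₀ (by linarith)
        linarith [Real.add_one_le_exp r]
      rw [← Real.exp_nat_mul] at hb
      linarith
    have hd2 : ((n:ℝ)+1) * Real.exp (-(p n * n)/3) ≤ 1/(n:ℝ) := by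
      have hlogn1 : Real.log ((n:ℝ)+1) ≤ 2 * Real.log n := by
        have hle : ((n:ℝ)+1) ≤ (n:ℝ)^2 := by nlinarith
        have := Real.log_le_log (by linarith) hle
        rwa [Real.log_pow, Nat.cast_ofNat] at this
      have hexp_le : Real.exp (-(p n * n)/3) ≤ Real.exp (-(2 * Real.log ((n:ℝ)+1))) := by
        apply Real.exp_le_exp.2
        have : 2 * Real.log ((n:ℝ)+1) ≤ 4 * Real.log n := by linarith
        linarith
      have hexp_eq : Real.exp (-(2 * Real.log ((n:ℝ)+1))) = 1/((n:ℝ)+1)^2 := by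
        rw [Real.exp_neg, two_mul, Real.exp_add, Real.exp_log (by linarith), one_div, sq]
      calc ((n:ℝ)+1) * Real.exp (-(p n * n)/3)
          ≤ ((n:ℝ)+1) * (1/((n:ℝ)+1)^2) := by
            apply mul_le_mul_of_nonneg_left _ (by linarith)
            rw [← hexp_eq]
            exact hexp_le
        _ = 1/((n:ℝ)+1) := by
            field_simp
        _ ≤ 1/(n:ℝ) := by
            apply one_div_le_one_div_of_le hn0
            linarith
    linarith
  have hδ0 : ∀ᶠ n : ℕ in atTop, (0:ℝ) ≤ δ n := by
    filter_upwards with n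
    rw [hδdef]
    have := hδ1nn n
    have h2 : (0:ℝ) ≤ ((n:ℝ)+1) * Real.exp (-(p n * n)/3) := by positivity
    linarith
  have hδtend : Tendsto δ atTop (𝓝 0) :=
    tendsto_of_tendsto_of_tendsto_of_le_of_le' tendsto_const_nhds hup hδ0 hδle
  -- measure of the complement tends to zero
  have hcompl : Tendsto (fun n : ℕ => erMeasure (n+1) (p n) ((Tgt n)ᶜ)) atTop (𝓝 0) := by
    apply tendsto_of_tendsto_of_tendsto_of_le_of_le' tendsto_const_nhds
      (g := fun _ => (0:ℝ≥0∞)) (h := fun n => ENNReal.ofReal (δ n))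
    · have := ENNReal.tendsto_ofReal hδtend
      simpa using this
    · filter_upwards with n
      exact bot_le
    · filter_upwards with n
      exact hbound n
  -- conclude
  have heq : ∀ n : ℕ, erMeasure (n+1) (p n) (Tgt n)
      = 1 - erMeasure (n+1) (p n) ((Tgt n)ᶜ) := by
    intro n
    have := prob_compl_eq_one_sub (μ := erMeasure (n+1) (p n)) (edge_measurable ((Tgt n)ᶜ))
    rw [compl_compl] at this
    exact this
  have hfinal : Tendsto (fun n : ℕ => 1 - erMeasure (n+1) (p n) ((Tgt n)ᶜ)) atTop (𝓝 1) := by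
    have hc : Continuous (fun x : ℝ≥0∞ => 1 - x) :=
      ENNReal.continuous_sub_left (by norm_num)
    have := (hc.tendsto 0).comp hcompl
    rw [tsub_zero] at this
    exact this
  exact Tendsto.congr (fun n => (heq n).symm) hfinal

end RP
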